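/- arXiv:1710.00162 — 4 statements merged into one kernel-verified Lean document; each statement's English description precedes it below -/
import Mathlib

section
/- Let f : R^n → R be differentiable with L-Lipschitz gradient, let e be a random vector uniformly distributed on the unit Euclidean sphere, and let y = x − (1/L)⟨∇f(x), e⟩e. Then ‖∇f(x)‖₂² ≤ 2nL·(f(x) − E_e[f(y)]). -/
open MeasureTheory

section Aux

variable {n : ℕ}

local notation "E" => EuclideanSpace ℝ (Fin n)

/-- inner ℝ with gradient equals fderiv applied. -/
lemma inner_gradient_eq (f : E → ℝ) (z w : E) :
    (inner ℝ (gradient f z) w : ℝ) = fderiv ℝ f z w := by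
  rw [gradient]
  exact InnerProductSpace.toDual_symm_apply

set_option maxHeartbeats 1000000 in
/-- Descent lemma. -/
lemma descent_lemma (f : E → ℝ) (hf : Differentiable ℝ f) {L : ℝ} (hL : 0 < L)
    (hlip : ∀ u v : E, ‖gradient f u - gradient f v‖ ≤ L * ‖u - v‖) (x v : E) :
    f (x + v) ≤ f x + inner ℝ (gradient f x) v + L / 2 * ‖v‖ ^ 2 := by
  set g := gradient f with hg
  have hgrad : ∀ z w : E, (inner ℝ (g z) w : ℝ) = fderiv ℝ f z w := fun z w => by
    rw [hg]; exact inner_gradient_eq f z w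
  have hgcont : Continuous g := by
    rw [hg]
    have : LipschitzWith ⟨L, hL.le⟩ (gradient f) := by
      apply LipschitzWith.of_dist_le_mul
      intro u v
      rw [dist_eq_norm, dist_eq_norm]; exact hlip u v
    exact this.continuous
  have hφ : ∀ t : ℝ, HasDerivAt (fun t : ℝ => f (x + t • v))
      ((inner ℝ (g (x + t • v)) v : ℝ)) t := by
    intro t
    have h1 : HasDerivAt (fun t : ℝ => x + t • v) v t := by
      simpa using ((hasDerivAt_id t).smul_const v).const_add x
    have h2 := ((hf (x + t • v)).hasFDerivAt).comp_hasDerivAt t h1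
    simpa [hgrad, Function.comp_def] using h2
  have hcont : Continuous fun t : ℝ => (inner ℝ (g (x + t • v)) v : ℝ) := by
    apply Continuous.inner
    · exact hgcont.comp (by continuity)
    · exact continuous_const
  have heq : f (x + v) - f x = ∫ t in (0:ℝ)..1, (inner ℝ (g (x + t • v)) v : ℝ) := by
    rw [intervalIntegral.integral_eq_sub_of_hasDerivAt (fun t _ => hφ t)
      (hcont.intervalIntegrable 0 1)]
    simp
  have hbound : ∀ t ∈ Set.Icc (0:ℝ) 1,
      (inner ℝ (g (x + t • v)) v : ℝ) ≤ (inner ℝ (g x) v : ℝ) + L * ‖v‖ ^ 2 * t := by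
    intro t ht
    have h3 : (inner ℝ (g (x + t • v)) v : ℝ) - inner ℝ (g x) v = inner ℝ (g (x + t • v) - g x) v := by
      rw [inner_sub_left]
    have h4 : (inner ℝ (g (x + t • v) - g x) v : ℝ) ≤ ‖g (x + t • v) - g x‖ * ‖v‖ :=
      real_inner_le_norm _ _
    have h5 : ‖g (x + t • v) - g x‖ ≤ L * (t * ‖v‖) := by
      have := hlip (x + t • v) x
      simpa [norm_smul, abs_of_nonneg ht.1] using this
    nlinarith [norm_nonneg v, mul_le_mul_of_nonneg_right h5 (norm_nonneg v)]
  have hint : (∫ t in (0:ℝ)..1, (inner ℝ (g (x + t • v)) v : ℝ)) ≤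
      ∫ t in (0:ℝ)..1, ((inner ℝ (g x) v : ℝ) + L * ‖v‖ ^ 2 * t) := by
    apply intervalIntegral.integral_mono_on zero_le_one
      (hcont.intervalIntegrable 0 1)
      (by apply Continuous.intervalIntegrable; continuity)
    exact hbound
  have hval : (∫ t in (0:ℝ)..1, ((inner ℝ (g x) v : ℝ) + L * ‖v‖ ^ 2 * t)) =
      (inner ℝ (g x) v : ℝ) + L / 2 * ‖v‖ ^ 2 := by
    rw [intervalIntegral.integral_add (intervalIntegrable_const)
      (by apply Continuous.intervalIntegrable; continuity)]
    rw [intervalIntegral.integral_const, intervalIntegral.integral_const_mul, integral_id]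
    simp
    ring
  rw [hval] at hint
  linarith [heq]


lemma ae_norm_one (μ : Measure E)
    (hsupp : μ (Metric.sphere (0 : E) 1)ᶜ = 0) : ∀ᵐ e ∂μ, ‖e‖ = 1 := by
  rw [Filter.eventually_iff, mem_ae_iff]
  apply measure_mono_null _ hsupp
  intro e he
  simp only [Set.mem_compl_iff, Metric.mem_sphere, dist_zero_right] at *
  exact he

lemma integrable_of_sphere_bound (μ : Measure E) [IsProbabilityMeasure μ]
    (hsupp : μ (Metric.sphere (0 : E) 1)ᶜ = 0)
    (h : E → ℝ) (hc : Continuous h) (C : ℝ) (hC : ∀ e : E, ‖e‖ = 1 → ‖h e‖ ≤ C) :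
    Integrable h μ := by
  refine ⟨hc.aestronglyMeasurable, HasFiniteIntegral.of_bounded (C := C) ?_⟩
  filter_upwards [ae_norm_one μ hsupp] with e he using hC e he

/-- The second moment of a linear functional over a rotation invariant sphere measure. -/
lemma second_moment (hn : 1 ≤ n) (μ : Measure E) [IsProbabilityMeasure μ]
    (hsupp : μ (Metric.sphere (0 : E) 1)ᶜ = 0)
    (hinv : ∀ T : E ≃ₗᵢ[ℝ] E, Measure.map T μ = μ)
    (g : E) : ∫ e, (inner ℝ g e : ℝ) ^ 2 ∂μ = ‖g‖ ^ 2 / n := by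
  have hn0 : (0:ℝ) < n := by exact_mod_cast hn
  -- reduce to unit vectors
  have key : ∀ u w : E, ‖u‖ = 1 → ‖w‖ = 1 →
      (∫ e, (inner ℝ u e : ℝ) ^ 2 ∂μ) = ∫ e, (inner ℝ w e : ℝ) ^ 2 ∂μ := by
    intro u w hu hw
    -- orthonormal bases with first vector u resp. w
    have hcard : Module.finrank ℝ E = Fintype.card (Fin n) := by simp
    have hbu : ∃ b : OrthonormalBasis (Fin n) ℝ E, ∀ i ∈ ({⟨0, hn⟩} : Set (Fin n)),
        b i = (fun _ => u) i := by
      apply Orthonormal.exists_orthonormalBasis_extension_of_card_eq hcard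
      constructor
      · intro i; simpa using hu
      · intro i j hij; exact absurd (Subsingleton.elim i j) hij
    have hbw : ∃ b : OrthonormalBasis (Fin n) ℝ E, ∀ i ∈ ({⟨0, hn⟩} : Set (Fin n)),
        b i = (fun _ => w) i := by
      apply Orthonormal.exists_orthonormalBasis_extension_of_card_eq hcard
      constructor
      · intro i; simpa using hw
      · intro i j hij; exact absurd (Subsingleton.elim i j) hij
    obtain ⟨bu, hbu⟩ := hbu
    obtain ⟨bw, hbw⟩ := hbw
    set T : E ≃ₗᵢ[ℝ] E := bu.repr.trans bw.repr.symm with hT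
    have hTu : T u = w := by
      have h1 : bu ⟨0, hn⟩ = u := hbu _ rfl
      have h2 : bw ⟨0, hn⟩ = w := hbw _ rfl
      rw [hT]
      simp only [LinearIsometryEquiv.trans_apply]
      rw [← h1, ← h2]
      rw [bu.repr_self]
      exact bw.repr_symm_single _ ▸ by simp [OrthonormalBasis.repr_symm_single]
    have hmeas : AEStronglyMeasurable (fun e : E => (inner ℝ w e : ℝ) ^ 2)
        (Measure.map T μ) := by
      apply Continuous.aestronglyMeasurable
      exact (continuous_const.inner continuous_id).pow 2
    calc (∫ e, (inner ℝ u e : ℝ) ^ 2 ∂μ)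
        = ∫ e, (inner ℝ w (T e) : ℝ) ^ 2 ∂μ := by
          congr 1; ext e
          rw [← hTu, T.inner_map_map]
      _ = ∫ e, (inner ℝ w e : ℝ) ^ 2 ∂(Measure.map T μ) := by
          rw [integral_map (T.continuous.aemeasurable) hmeas]
      _ = ∫ e, (inner ℝ w e : ℝ) ^ 2 ∂μ := by rw [hinv T]
  -- unit vector case: value 1/n
  have unit_case : ∀ u : E, ‖u‖ = 1 → (∫ e, (inner ℝ u e : ℝ) ^ 2 ∂μ) = 1 / n := by
    intro u hu
    obtain ⟨b⟩ : Nonempty (OrthonormalBasis (Fin n) ℝ E) :=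
      ⟨(stdOrthonormalBasis ℝ E).reindex (finCongr (by simp))⟩
    have hint : ∀ i : Fin n, Integrable (fun e => (inner ℝ (b i) e : ℝ) ^ 2) μ := by
      intro i
      apply integrable_of_sphere_bound μ hsupp (fun e => (inner ℝ (b i) e : ℝ) ^ 2)
        (by exact (continuous_const.inner continuous_id).pow 2) 1
      intro e he
      have h1 := abs_real_inner_le_norm (b i) e
      rw [b.orthonormal.1 i, he, one_mul] at h1
      rw [Real.norm_eq_abs, _root_.abs_pow]
      exact pow_le_one₀ (abs_nonneg _) h1
    have hsum : ∑ i, (∫ e, (inner ℝ (b i) e : ℝ) ^ 2 ∂μ) = 1 := by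
      rw [← integral_finset_sum _ (fun i _ => hint i)]
      have : ∀ᵐ e ∂μ, (∑ i, (inner ℝ (b i) e : ℝ) ^ 2) = 1 := by
        filter_upwards [ae_norm_one μ hsupp] with e he
        have := b.sum_inner_mul_inner e e
        have h2 : ∀ i, (inner ℝ e (b i) : ℝ) * inner ℝ (b i) e = (inner ℝ (b i) e : ℝ) ^ 2 := by
          intro i; rw [real_inner_comm]; ring
        simp_rw [h2] at this
        rw [this, real_inner_self_eq_norm_sq, he]; norm_num
      rw [integral_congr_ae this]
      simp
    have hall : ∀ i : Fin n, (∫ e, (inner ℝ (b i) e : ℝ) ^ 2 ∂μ) =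
        ∫ e, (inner ℝ u e : ℝ) ^ 2 ∂μ :=
      fun i => key _ _ (b.orthonormal.1 i) hu
    rw [Finset.sum_congr rfl (fun i _ => hall i), Finset.sum_const] at hsum
    simp only [Finset.card_univ, Fintype.card_fin, nsmul_eq_mul] at hsum
    rw [eq_div_iff (ne_of_gt hn0)]
    linarith [hsum]
  by_cases hg : g = 0
  · simp [hg, zero_div]
  · have hgn : ‖g‖ ≠ 0 := norm_ne_zero_iff.mpr hg
    set u : E := ‖g‖⁻¹ • g with hu
    have hunorm : ‖u‖ = 1 := by
      rw [hu, norm_smul]; simp [abs_of_nonneg (norm_nonneg g), hgn]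
    have : ∀ e : E, (inner ℝ g e : ℝ) ^ 2 = ‖g‖ ^ 2 * (inner ℝ u e : ℝ) ^ 2 := by
      intro e
      rw [hu, real_inner_smul_left]
      field_simp
    simp_rw [this]
    rw [integral_const_mul, unit_case u hunorm]
    ring

end Aux

/-- For `e` uniform on the unit sphere and `y = x − (1/L)⟨∇f(x),e⟩e`,
`‖∇f(x)‖₂² ≤ 2nL·(f(x) − E_e[f(y)])`. -/
theorem grad_norm_sq_le_expectation_progress (n : ℕ) (hn : 1 ≤ n)
    (μ : Measure (EuclideanSpace ℝ (Fin n))) [IsProbabilityMeasure μ]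
    (hsupp : μ (Metric.sphere (0 : EuclideanSpace ℝ (Fin n)) 1)ᶜ = 0)
    (hinv : ∀ T : EuclideanSpace ℝ (Fin n) ≃ₗᵢ[ℝ] EuclideanSpace ℝ (Fin n),
      Measure.map T μ = μ)
    (f : EuclideanSpace ℝ (Fin n) → ℝ) (hf : Differentiable ℝ f)
    (L : ℝ) (hL : 0 < L)
    (hlip : ∀ u v, ‖gradient f u - gradient f v‖ ≤ L * ‖u - v‖)
    (x : EuclideanSpace ℝ (Fin n)) :
    ‖gradient f x‖ ^ 2 ≤
      2 * n * L *
        (f x - ∫ e, f (x - ((1 / L) * (inner ℝ (gradient f x) e : ℝ)) • e) ∂μ) := by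
  set g := gradient f x with hgdef
  have hn0 : (0:ℝ) < n := by exact_mod_cast hn
  -- pointwise descent inequality on the sphere
  have hpt : ∀ e : EuclideanSpace ℝ (Fin n), ‖e‖ = 1 →
      f (x - ((1 / L) * (inner ℝ g e : ℝ)) • e) ≤
        f x - 1 / (2 * L) * (inner ℝ g e : ℝ) ^ 2 := by
    intro e he
    set c : ℝ := (1 / L) * (inner ℝ g e : ℝ) with hc
    have hd := descent_lemma f hf hL hlip x (-(c • e))
    have h1 : x + -(c • e) = x - c • e := by abel
    have h2 : (inner ℝ g (-(c • e)) : ℝ) = -(c * inner ℝ g e) := by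
      rw [inner_neg_right, real_inner_smul_right]
    have h3 : ‖-(c • e)‖ ^ 2 = c ^ 2 := by
      rw [norm_neg, norm_smul, he]
      simp [sq_abs]
    rw [h1, h2, h3] at hd
    have h4 : f x + -(c * inner ℝ g e) + L / 2 * c ^ 2 =
        f x - 1 / (2 * L) * (inner ℝ g e : ℝ) ^ 2 := by
      rw [hc]; field_simp; ring
    linarith [h4 ▸ hd]
  -- integrability of the two integrands
  obtain ⟨C, hC⟩ := (isCompact_closedBall x (‖g‖ / L)).exists_bound_of_continuousOn
    (hf.continuous.continuousOn)
  have Ify : Integrable (fun e => f (x - ((1 / L) * (inner ℝ g e : ℝ)) • e)) μ := by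
    apply integrable_of_sphere_bound μ hsupp _ ?_ C
    · intro e he
      apply hC
      rw [Metric.mem_closedBall, dist_eq_norm]
      have : x - ((1 / L) * (inner ℝ g e : ℝ)) • e - x = -(((1 / L) * (inner ℝ g e : ℝ)) • e) := by
        abel
      rw [this, norm_neg, norm_smul, he, mul_one]
      have hie : |(inner ℝ g e : ℝ)| ≤ ‖g‖ := by
        have := abs_real_inner_le_norm g e
        rwa [he, mul_one] at this
      rw [Real.norm_eq_abs, abs_mul, abs_of_nonneg (by positivity : (0:ℝ) ≤ 1 / L)]
      calc 1 / L * |(inner ℝ g e : ℝ)| ≤ 1 / L * ‖g‖ :=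
            mul_le_mul_of_nonneg_left hie (by positivity)
        _ = ‖g‖ / L := by ring
    · apply hf.continuous.comp
      apply Continuous.sub continuous_const
      apply Continuous.fun_smul _ continuous_id
      exact continuous_const.mul (continuous_const.inner continuous_id)
  have Isq : Integrable (fun e : EuclideanSpace ℝ (Fin n) => (inner ℝ g e : ℝ) ^ 2) μ := by
    apply integrable_of_sphere_bound μ hsupp _
      ((continuous_const.inner continuous_id).pow 2) (‖g‖ ^ 2)
    intro e he
    have hie : |(inner ℝ g e : ℝ)| ≤ ‖g‖ := by
      have := abs_real_inner_le_norm g e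
      rwa [he, mul_one] at this
    show ‖(inner ℝ g e : ℝ) ^ 2‖ ≤ ‖g‖ ^ 2
    rw [Real.norm_eq_abs, _root_.abs_pow]
    exact pow_le_pow_left₀ (abs_nonneg _) hie 2
  have Iq : Integrable (fun e : EuclideanSpace ℝ (Fin n) =>
      f x - 1 / (2 * L) * (inner ℝ g e : ℝ) ^ 2) μ :=
    (integrable_const (f x)).sub (Isq.const_mul _)
  -- compare integrals
  have hmono : (∫ e, f (x - ((1 / L) * (inner ℝ g e : ℝ)) • e) ∂μ) ≤
      ∫ e, (f x - 1 / (2 * L) * (inner ℝ g e : ℝ) ^ 2) ∂μ := by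
    apply integral_mono_ae Ify Iq
    filter_upwards [ae_norm_one μ hsupp] with e he using hpt e he
  have hval : (∫ e, (f x - 1 / (2 * L) * (inner ℝ g e : ℝ) ^ 2) ∂μ) =
      f x - 1 / (2 * L) * (‖g‖ ^ 2 / n) := by
    rw [integral_sub (integrable_const _) (Isq.const_mul _), integral_const,
      integral_const_mul, second_moment hn μ hsupp hinv g]
    simp
  rw [hval] at hmono
  have hcalc : 2 * (n:ℝ) * L * (1 / (2 * L) * (‖g‖ ^ 2 / n)) = ‖g‖ ^ 2 := by
    field_simp
  have hfin : 1 / (2 * L) * (‖g‖ ^ 2 / n) ≤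
      f x - ∫ e, f (x - ((1 / L) * (inner ℝ g e : ℝ)) • e) ∂μ := by linarith
  have := mul_le_mul_of_nonneg_left hfin (by positivity : (0:ℝ) ≤ 2 * n * L)
  linarith [hcalc ▸ this]
end

section
/- Let d : R^n → R be differentiable, V_z(y) its Bregman divergence, h ∈ R^n, α > 0, and suppose z⁺ = argmin_{y∈R^n}{α⟨h, y − z⟩ + V_z(y)} exists. Then for every u ∈ R^n: α⟨h, z − u⟩ ≤ α⟨h, z − z⁺⟩ + V_z(u) − V_{z⁺}(u) − V_z(z⁺). -/
theorem gradV (n : ℕ) (d : EuclideanSpace ℝ (Fin n) → ℝ) (hd : Differentiable ℝ d)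
    (z zp : EuclideanSpace ℝ (Fin n)) :
    HasGradientAt (fun y => d y - d z - (inner ℝ (gradient d z) (y - z) : ℝ))
      (gradient d zp - gradient d z) zp := by
  rw [hasGradientAt_iff_hasFDerivAt]
  have h1 : HasFDerivAt d (fderiv ℝ d zp) zp := (hd zp).hasFDerivAt
  have h2 : HasFDerivAt (fun y : EuclideanSpace ℝ (Fin n) => (inner ℝ (gradient d z) (y - z) : ℝ))
      (innerSL ℝ (gradient d z)) zp := by
    have := (innerSL ℝ (gradient d z)).hasFDerivAt (x := zp - z)
    have h3 : HasFDerivAt (fun y : EuclideanSpace ℝ (Fin n) => y - z)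
        (ContinuousLinearMap.id ℝ _) zp := (hasFDerivAt_id zp).sub_const z
    exact this.comp zp h3
  have := (h1.sub_const (d z)).sub h2
  refine this.congr_fderiv ?_
  simp only [map_sub, gradient, LinearIsometryEquiv.apply_symm_apply]
  congr 1
  ext v
  simp

/-- Mirror-descent step inequality: if `z⁺` minimizes `y ↦ α⟨h,y−z⟩ + V_z(y)` (expressed via
the first-order optimality condition), then for every `u`,
`α⟨h, z−u⟩ ≤ α⟨h, z−z⁺⟩ + V_z(u) − V_{z⁺}(u) − V_z(z⁺)`. -/
theorem mirror_step_inequality (n : ℕ)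
    (d : EuclideanSpace ℝ (Fin n) → ℝ) (hd : Differentiable ℝ d)
    (hconv : ConvexOn ℝ Set.univ d)
    (V : EuclideanSpace ℝ (Fin n) → EuclideanSpace ℝ (Fin n) → ℝ)
    (hV : ∀ z y, V z y = d y - d z - (inner ℝ (gradient d z) (y - z) : ℝ))
    (h : EuclideanSpace ℝ (Fin n)) (α : ℝ) (hα : 0 < α)
    (z zp : EuclideanSpace ℝ (Fin n))
    (hopt : ∀ u, 0 ≤ (inner ℝ (gradient (V z) zp + α • h) (u - zp) : ℝ)) :
    ∀ u, α * (inner ℝ h (z - u) : ℝ) ≤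
      α * (inner ℝ h (z - zp) : ℝ) + V z u - V zp u - V z zp := by
  intro u
  have hVz : V z = fun y => d y - d z - (inner ℝ (gradient d z) (y - z) : ℝ) :=
    funext (hV z)
  have hg : gradient (V z) zp = gradient d zp - gradient d z := by
    rw [hVz]
    exact (gradV n d hd z zp).gradient
  have h0 := hopt u
  rw [hg] at h0
  simp only [hV, inner_add_left, inner_sub_left, inner_sub_right,
    real_inner_smul_left] at h0 ⊢
  nlinarith [h0]
end

section
/- If e is uniformly distributed on the unit Euclidean sphere in R^n with n ≥ 8 and 2 ≤ q ≤ ∞, then E[‖e‖_q²] ≤ min{q − 1, 16 ln n − 8}·n^{2/q − 1}. -/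
open MeasureTheory
open scoped ENNReal
open Finset Real

set_option linter.unusedVariables false
set_option linter.unusedSectionVars false
set_option maxHeartbeats 1000000

/-- odd double factorial: D m = 1·3·…·(2m-1) -/
def Dfac : ℕ → ℕ
  | 0 => 1
  | (m+1) => (2*m+1) * Dfac m

lemma Dfac_pos (m : ℕ) : 0 < Dfac m := by
  induction m with
  | zero => simp [Dfac]
  | succ m ih => exact Nat.mul_pos (by omega) ih

lemma two_pow_mul_factorial_mul_Dfac (m : ℕ) :
    2 ^ m * m.factorial * Dfac m = (2*m).factorial := by
  induction m with
  | zero => simp [Dfac]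
  | succ m ih =>
    have h2 : 2*(m+1) = (2*m+1)+1 := by ring
    rw [Dfac, h2, Nat.factorial_succ, Nat.factorial_succ]
    rw [Nat.factorial_succ]
    have : 2 ^ (m+1) * ((m+1) * m.factorial) * ((2*m+1) * Dfac m)
        = ((2*m+1)+1) * ((2*m+1) * (2 ^ m * m.factorial * Dfac m)) := by ring
    rw [this, ih]

lemma two_pow_mul_factorial_le (j : ℕ) : 2 ^ j * j.factorial ≤ (2*j).factorial := by
  induction j with
  | zero => simp
  | succ j ih =>
    have h2 : 2*(j+1) = (2*j+1)+1 := by ring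
    rw [h2, Nat.factorial_succ, Nat.factorial_succ]
    calc 2 ^ (j+1) * ((j+1) * j.factorial) = (2*(j+1)) * (2^j * j.factorial) := by ring
    _ ≤ (2*(j+1)) * (2*j).factorial := Nat.mul_le_mul_left _ ih
    _ = ((2*j+1)+1) * (2*j).factorial := by ring_nf
    _ ≤ ((2*j+1)+1) * ((2*j+1) * (2*j).factorial) := Nat.mul_le_mul_left _ (Nat.le_mul_of_pos_left _ (by omega))

/-- key nat inequality: C(2m,2j)·D_{m-j} ≤ D_m·C(m,j) for j ≤ m -/
lemma choose_mul_Dfac_le {m j : ℕ} (h : j ≤ m) :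
    (2*m).choose (2*j) * Dfac (m - j) ≤ Dfac m * m.choose j := by
  have h2j : 2*j ≤ 2*m := by omega
  have c1 : (2*m).choose (2*j) * (2*j).factorial * (2*(m-j)).factorial = (2*m).factorial := by
    have := Nat.choose_mul_factorial_mul_factorial h2j
    have e : 2*m - 2*j = 2*(m-j) := by omega
    rw [e] at this; linarith [this]
  have c2 : m.choose j * j.factorial * (m-j).factorial = m.factorial :=
    Nat.choose_mul_factorial_mul_factorial h
  -- A * D_{m-j} * ((2j)! * 2^{m-j} * (m-j)!) = (2m)!
  have e1 : (2*m).choose (2*j) * Dfac (m-j) * ((2*j).factorial * (2 ^ (m-j) * (m-j).factorial))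
      = (2*m).factorial := by
    rw [← c1, ← two_pow_mul_factorial_mul_Dfac (m-j)]; ring
  -- D_m * C(m,j) * (2^m * j! * (m-j)!) = (2m)!
  have e2 : Dfac m * m.choose j * (2 ^ m * (j.factorial * (m-j).factorial))
      = (2*m).factorial := by
    rw [← two_pow_mul_factorial_mul_Dfac m, ← c2]
    have : 2 ^ m = 2 ^ j * 2 ^ (m-j) := by rw [← pow_add]; congr 1; omega
    rw [this]; ring
  -- and 2^m * j! * (m-j)! ≤ (2j)! * 2^{m-j} * (m-j)!  since 2^j j! ≤ (2j)!
  have hle : 2 ^ m * (j.factorial * (m-j).factorial)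
      ≤ (2*j).factorial * (2 ^ (m-j) * (m-j).factorial) := by
    have : 2 ^ m = 2 ^ j * 2 ^ (m-j) := by rw [← pow_add]; congr 1; omega
    rw [this]
    calc 2 ^ j * 2 ^ (m-j) * (j.factorial * (m-j).factorial)
        = (2 ^ j * j.factorial) * (2 ^ (m-j) * (m-j).factorial) := by ring
      _ ≤ (2*j).factorial * (2 ^ (m-j) * (m-j).factorial) :=
        Nat.mul_le_mul_right _ (two_pow_mul_factorial_le j)
  -- conclude
  by_contra hcon
  push_neg at hcon
  have hpos : 0 < 2 ^ m * (j.factorial * (m-j).factorial) :=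
    Nat.mul_pos (Nat.pow_pos (by norm_num)) (Nat.mul_pos (Nat.factorial_pos _) (Nat.factorial_pos _))
  have : (2*m).factorial < (2*m).factorial := by
    calc (2*m).factorial = Dfac m * m.choose j * (2 ^ m * (j.factorial * (m-j).factorial)) := e2.symm
    _ < (2*m).choose (2*j) * Dfac (m-j) * (2 ^ m * (j.factorial * (m-j).factorial)) :=
        (Nat.mul_lt_mul_right hpos).2 hcon
    _ ≤ (2*m).choose (2*j) * Dfac (m-j) * ((2*j).factorial * (2 ^ (m-j) * (m-j).factorial)) :=
        Nat.mul_le_mul_left _ hle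
    _ = (2*m).factorial := e1
  exact lt_irrefl _ this

lemma Dfac_succ (m : ℕ) : Dfac (m+1) = (2*m+1) * Dfac m := rfl
lemma Dfac_one : Dfac 1 = 1 := rfl

/-- Dfac k ≤ (2k-1)^{k-1} for k ≥ 1 -/
lemma Dfac_le (k : ℕ) (hk : 1 ≤ k) : Dfac k ≤ (2*k-1)^(k-1) := by
  induction k with
  | zero => omega
  | succ k ih =>
    rcases Nat.eq_or_lt_of_le hk with h | h
    · have : k = 0 := by omega
      subst this
      rw [Dfac_one]
      norm_num
    · have hk1 : 1 ≤ k := by omega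
      have := ih hk1
      calc Dfac (k+1) = (2*k+1) * Dfac k := Dfac_succ k
        _ ≤ (2*k+1) * (2*k-1)^(k-1) := Nat.mul_le_mul_left _ this
        _ ≤ (2*k+1) * (2*k+1)^(k-1) :=
            Nat.mul_le_mul_left _ (Nat.pow_le_pow_left (by omega) _)
        _ = (2*k+1)^(k-1+1) := (pow_succ' _ _).symm
        _ = (2*(k+1)-1)^(k+1-1) := by congr 1 <;> omega

lemma log_three_le : Real.log 3 ≤ 4/3 := by
  rw [Real.log_le_iff_le_exp (by norm_num)]
  have h1 : (4:ℝ)/3 = 1 + 1/3 := by norm_num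
  rw [h1, Real.exp_add]
  have h2 : (2.7182818283 : ℝ) < Real.exp 1 := Real.exp_one_gt_d9
  have h3 : (1:ℝ) + 1/3 ≤ Real.exp (1/3) := by linarith [Real.add_one_le_exp (1/3:ℝ)]
  nlinarith [Real.exp_pos (1/3 : ℝ)]

lemma log_ge_aux {t : ℝ} (ht : 0 ≤ t) : 2*t/(1+2*t) ≤ Real.log (1+2*t) := by
  have hpos : (0:ℝ) < 1 + 2*t := by linarith
  have h := Real.log_le_sub_one_of_pos (x := 1/(1+2*t)) (by positivity)
  rw [Real.log_div (by norm_num) hpos.ne', Real.log_one] at h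
  have : 1/(1+2*t) - 1 = -(2*t/(1+2*t)) := by field_simp; ring
  rw [this] at h
  linarith

/-- k=1 case: 3^t ≤ (1+2t)^{1+t} for t ∈ [0,1] -/
lemma W_one {t : ℝ} (ht0 : 0 ≤ t) (ht1 : t ≤ 1) :
    (3:ℝ) ^ t ≤ (1+2*t) ^ (1+t) := by
  have hpos : (0:ℝ) < 1 + 2*t := by linarith
  rw [Real.rpow_def_of_pos (by norm_num : (0:ℝ) < 3), Real.rpow_def_of_pos hpos]
  apply Real.exp_le_exp.2
  have h1 : Real.log 3 * t ≤ (4/3) * t :=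
    mul_le_mul_of_nonneg_right log_three_le ht0
  have h2 : (1+t) * (2*t/(1+2*t)) ≤ (1+t) * Real.log (1+2*t) :=
    mul_le_mul_of_nonneg_left (log_ge_aux ht0) (by linarith)
  have h3 : (4/3) * t ≤ (1+t) * (2*t/(1+2*t)) := by
    have he : (1+t) * (2*t/(1+2*t)) = (2*t*(1+t))/(1+2*t) := by ring
    rw [he, le_div_iff₀ hpos]
    nlinarith
  calc Real.log 3 * t ≤ (4/3)*t := h1
    _ ≤ (1+t) * (2*t/(1+2*t)) := h3
    _ ≤ (1+t) * Real.log (1+2*t) := h2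
    _ = Real.log (1+2*t) * (1+t) := by ring

/-- main coefficient inequality: D_k^{1-t} D_{k+1}^t ≤ (2k+2t-1)^{k+t}, k ≥ 1, t ∈ [0,1] -/
lemma W_coeff {k : ℕ} (hk : 1 ≤ k) {t : ℝ} (ht0 : 0 ≤ t) (ht1 : t ≤ 1) :
    (Dfac k : ℝ) ^ (1-t) * (Dfac (k+1) : ℝ) ^ t ≤ (2*k+2*t-1) ^ ((k:ℝ)+t) := by
  have hDk : (0:ℝ) < Dfac k := by exact_mod_cast Dfac_pos k
  have hbase : (1:ℝ) ≤ 2*k - 1 := by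
    have : (1:ℝ) ≤ (k:ℝ) := by exact_mod_cast hk
    linarith
  -- LHS = Dfac k * (2k+1)^t
  have lhs_eq : (Dfac k : ℝ) ^ (1-t) * (Dfac (k+1) : ℝ) ^ t
      = (Dfac k : ℝ) * (2*(k:ℝ)+1) ^ t := by
    have : (Dfac (k+1) : ℝ) = (2*(k:ℝ)+1) * Dfac k := by
      rw [Dfac_succ]; push_cast; ring
    rw [this, Real.mul_rpow (by linarith) hDk.le, ← mul_assoc,
      mul_comm ((Dfac k:ℝ)^(1-t)) _, mul_assoc, ← Real.rpow_add hDk]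
    ring_nf
    rw [Real.rpow_one]
  rw [lhs_eq]
  rcases Nat.eq_or_lt_of_le hk with h | h
  · -- k = 1
    subst_eqs
    rw [Dfac_one]
    have e1 : 2*((1:ℕ):ℝ)+1 = 3 := by norm_num
    have e2 : 2*((1:ℕ):ℝ)+2*t-1 = 1+2*t := by push_cast; ring
    have e3 : ((1:ℕ):ℝ)+t = 1+t := by norm_num
    rw [e1, e2, e3, Nat.cast_one, one_mul]
    exact W_one ht0 ht1
  · -- k ≥ 2
    have hk2 : 2 ≤ k := h
    have hk2' : (2:ℝ) ≤ (k:ℝ) := by exact_mod_cast hk2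
    have h3 : (3:ℝ) ≤ 2*(k:ℝ)-1 := by linarith
    -- Dfac k ≤ (2k-1)^{k-1}
    have hD : (Dfac k : ℝ) ≤ (2*(k:ℝ)-1) ^ ((k:ℝ)-1) := by
      have hnat := Dfac_le k hk
      have : ((2*k-1 : ℕ) : ℝ) ^ ((k:ℕ)-1 : ℕ) = (2*(k:ℝ)-1) ^ ((k:ℝ)-1) := by
        rw [← Real.rpow_natCast]
        congr 1
        · push_cast [Nat.cast_sub (by omega : 1 ≤ 2*k)]; ring
        · push_cast [Nat.cast_sub hk]; ring
      calc (Dfac k : ℝ) ≤ ((2*k-1 : ℕ) : ℝ) ^ ((k:ℕ)-1 : ℕ) := by exact_mod_cast hnat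
        _ = (2*(k:ℝ)-1) ^ ((k:ℝ)-1) := this
    -- (2k+1)^t ≤ (2k-1)^{1+t}
    have hstep : (2*(k:ℝ)+1) ^ t ≤ (2*(k:ℝ)-1) ^ (1+t) := by
      have hq : (2*(k:ℝ)+1) = ((2*(k:ℝ)+1)/(2*(k:ℝ)-1)) * (2*(k:ℝ)-1) := by
        field_simp
      rw [hq, Real.mul_rpow (by positivity) (by linarith), Real.rpow_add (by linarith : (0:ℝ) < 2*(k:ℝ)-1), Real.rpow_one]
      have hr1 : ((2*(k:ℝ)+1)/(2*(k:ℝ)-1)) ^ t ≤ ((2*(k:ℝ)+1)/(2*(k:ℝ)-1)) := by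
        nth_rewrite 2 [← Real.rpow_one ((2*(k:ℝ)+1)/(2*(k:ℝ)-1))]
        apply Real.rpow_le_rpow_of_exponent_le _ ht1
        rw [le_div_iff₀ (by linarith)]; linarith
      have hr2 : ((2*(k:ℝ)+1)/(2*(k:ℝ)-1)) ≤ (2*(k:ℝ)-1) := by
        rw [div_le_iff₀ (by linarith)]; nlinarith
      have hrpos : (0:ℝ) ≤ (2*(k:ℝ)-1) ^ t := Real.rpow_nonneg (by linarith) t
      exact mul_le_mul_of_nonneg_right (le_trans hr1 hr2) hrpos
    have hcomb : (Dfac k : ℝ) * (2*(k:ℝ)+1) ^ t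
        ≤ (2*(k:ℝ)-1) ^ ((k:ℝ)-1) * (2*(k:ℝ)-1) ^ (1+t) :=
      mul_le_mul hD hstep (Real.rpow_nonneg (by linarith) t)
        (Real.rpow_nonneg (by linarith) _)
    have heq : (2*(k:ℝ)-1) ^ ((k:ℝ)-1) * (2*(k:ℝ)-1) ^ (1+t) = (2*(k:ℝ)-1) ^ ((k:ℝ)+t) := by
      rw [← Real.rpow_add (by linarith : (0:ℝ) < 2*(k:ℝ)-1)]; ring_nf
    have hlast : (2*(k:ℝ)-1) ^ ((k:ℝ)+t) ≤ (2*(k:ℝ)+2*t-1) ^ ((k:ℝ)+t) :=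
      Real.rpow_le_rpow (by linarith) (by linarith) (by positivity)
    rw [heq] at hcomb
    exact le_trans hcomb hlast

lemma sum_range_even_odd (g : ℕ → ℝ) (m : ℕ) :
    ∑ k ∈ range (2*m+1), g k = ∑ j ∈ range (m+1), g (2*j) + ∑ j ∈ range m, g (2*j+1) := by
  induction m with
  | zero => simp
  | succ m ih =>
    have h : 2*(m+1)+1 = (2*m+1) + 1 + 1 := by ring
    rw [h, Finset.sum_range_succ, Finset.sum_range_succ, ih,
      Finset.sum_range_succ (fun j => g (2*j)) (m+1), Finset.sum_range_succ (fun j => g (2*j+1)) m]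
    have e1 : 2*(m+1) = 2*m+1+1 := by ring
    have e2 : 2*m+1 = 2*m+1 := rfl
    rw [e1]; ring

lemma even_pow_add_pow (x c : ℝ) (m : ℕ) :
    (x+c)^(2*m) + (x-c)^(2*m)
      = ∑ j ∈ range (m+1), 2 * ((2*m).choose (2*j) : ℝ) * x^(2*j) * c^(2*(m-j)) := by
  have hsub : x - c = x + (-c) := by ring
  rw [add_pow, hsub, add_pow, ← Finset.sum_add_distrib]
  have hpt : ∀ k ∈ range (2*m+1),
      x ^ k * c ^ (2*m - k) * ((2*m).choose k : ℝ) + x ^ k * (-c) ^ (2*m - k) * ((2*m).choose k : ℝ)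
      = (fun k => x ^ k * (c ^ (2*m - k) + (-c) ^ (2*m - k)) * ((2*m).choose k : ℝ)) k := by
    intro k _; ring
  rw [Finset.sum_congr rfl hpt, sum_range_even_odd]
  have hodd : ∀ j ∈ range m,
      (fun k => x ^ k * (c ^ (2*m - k) + (-c) ^ (2*m - k)) * ((2*m).choose k : ℝ)) (2*j+1) = 0 := by
    intro j hj
    rw [Finset.mem_range] at hj
    have h1 : Odd (2*m - (2*j+1)) := by
      rcases Nat.exists_eq_add_of_lt hj with ⟨d, rfl⟩
      have : 2*(j+d+1) - (2*j+1) = 2*d+1 := by omega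
      rw [this]; exact ⟨d, by omega⟩
    simp only []
    rw [h1.neg_pow]; ring
  rw [Finset.sum_congr rfl hodd, Finset.sum_const, smul_zero, add_zero]
  apply Finset.sum_congr rfl
  intro j hj
  rw [Finset.mem_range] at hj
  have h1 : 2*m - 2*j = 2*(m-j) := by omega
  have h2 : Even (2*(m-j)) := even_two_mul _
  show x ^ (2*j) * (c ^ (2*m - 2*j) + (-c) ^ (2*m - 2*j)) * ((2*m).choose (2*j) : ℝ)
      = 2 * ((2*m).choose (2*j) : ℝ) * x^(2*j) * c^(2*(m-j))
  rw [h1, h2.neg_pow]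
  ring

-- Khintchine-type: average of (±-signed sums)^{2m} ≤ D_m (Σ a_i²)^m
lemma khintchine {ι : Type*} [DecidableEq ι] (A : Finset ι) (a : ι → ℝ) (m : ℕ) :
    ∑ s ∈ A.powerset, (∑ i ∈ A, (if i ∈ s then -1 else 1) * a i) ^ (2*m)
      ≤ 2 ^ A.card * Dfac m * (∑ i ∈ A, (a i)^2) ^ m := by
  induction A using Finset.induction generalizing m with
  | empty =>
    cases m with
    | zero => norm_num [Dfac]
    | succ m => simp
  | @insert j A hj ih =>
    -- abbreviations
    set S := ∑ i ∈ A, (a i)^2 with hS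
    have hSnn : 0 ≤ S := Finset.sum_nonneg fun i _ => sq_nonneg _
    have key : ∀ s ∈ A.powerset,
        (∑ i ∈ insert j A, (if i ∈ s then -1 else 1) * a i)
          = (∑ i ∈ A, (if i ∈ s then -1 else 1) * a i) + a j ∧
        (∑ i ∈ insert j A, (if i ∈ insert j s then -1 else 1) * a i)
          = (∑ i ∈ A, (if i ∈ s then -1 else 1) * a i) - a j := by
      intro s hs
      rw [Finset.mem_powerset] at hs
      have hjs : j ∉ s := fun h => hj (hs h)
      constructor
      · rw [Finset.sum_insert hj, if_neg hjs]
        ring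
      · rw [Finset.sum_insert hj, if_pos (Finset.mem_insert_self j s)]
        have : ∀ i ∈ A, (if i ∈ insert j s then -1 else (1:ℝ)) * a i
            = (if i ∈ s then -1 else 1) * a i := by
          intro i hi
          have : i ≠ j := fun h => hj (h ▸ hi)
          simp [Finset.mem_insert, this]
        rw [Finset.sum_congr rfl this]
        ring
    rw [Finset.powerset_insert]
    have hdisj : Disjoint A.powerset (A.powerset.image (insert j)) := by
      rw [Finset.disjoint_left]
      intro s hs hs'
      rw [Finset.mem_powerset] at hs
      rcases Finset.mem_image.1 hs' with ⟨t, ht, rfl⟩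
      exact hj (hs (Finset.mem_insert_self j t))
    have hinj : ∀ x ∈ A.powerset, ∀ y ∈ A.powerset, insert j x = insert j y → x = y := by
      intro x hx y hy hxy
      rw [Finset.mem_powerset] at hx hy
      have hjx : j ∉ x := fun h => hj (hx h)
      have hjy : j ∉ y := fun h => hj (hy h)
      rw [← Finset.erase_insert hjx, ← Finset.erase_insert hjy, hxy]
    rw [Finset.sum_union hdisj, Finset.sum_image hinj]
    have e1 : ∑ s ∈ A.powerset, (∑ i ∈ insert j A, (if i ∈ s then -1 else 1) * a i) ^ (2*m)
        = ∑ s ∈ A.powerset,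
          ((∑ i ∈ A, (if i ∈ s then -1 else 1) * a i) + a j)^(2*m) :=
      Finset.sum_congr rfl (fun s hs => by rw [(key s hs).1])
    have e2 : ∑ s ∈ A.powerset, (∑ i ∈ insert j A, (if i ∈ insert j s then -1 else 1) * a i) ^ (2*m)
        = ∑ s ∈ A.powerset,
          ((∑ i ∈ A, (if i ∈ s then -1 else 1) * a i) - a j)^(2*m) :=
      Finset.sum_congr rfl (fun s hs => by rw [(key s hs).2])
    rw [e1, e2, ← Finset.sum_add_distrib]
    have e3 : ∀ s ∈ A.powerset,
        ((∑ i ∈ A, (if i ∈ s then -1 else 1) * a i) + a j)^(2*m)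
          + ((∑ i ∈ A, (if i ∈ s then -1 else 1) * a i) - a j)^(2*m)
        = ∑ j' ∈ range (m+1), 2 * ((2*m).choose (2*j') : ℝ)
            * (∑ i ∈ A, (if i ∈ s then -1 else 1) * a i)^(2*j') * (a j)^(2*(m-j')) :=
      fun s _ => even_pow_add_pow _ _ m
    rw [Finset.sum_congr rfl e3, Finset.sum_comm]
    have step : ∀ j' ∈ range (m+1),
        (∑ s ∈ A.powerset, 2 * ((2*m).choose (2*j') : ℝ)
            * (∑ i ∈ A, (if i ∈ s then -1 else 1) * a i)^(2*j') * (a j)^(2*(m-j')))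
        ≤ 2 * ((2*m).choose (2*j') : ℝ) * (a j)^(2*(m-j')) * (2 ^ A.card * Dfac j' * S ^ j') := by
      intro j' _
      have hrw : (∑ s ∈ A.powerset, 2 * ((2*m).choose (2*j') : ℝ)
            * (∑ i ∈ A, (if i ∈ s then -1 else 1) * a i)^(2*j') * (a j)^(2*(m-j')))
          = 2 * ((2*m).choose (2*j') : ℝ) * (a j)^(2*(m-j'))
            * ∑ s ∈ A.powerset, (∑ i ∈ A, (if i ∈ s then -1 else 1) * a i)^(2*j') := by
        rw [Finset.mul_sum]; exact Finset.sum_congr rfl fun s _ => by ring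
      rw [hrw]
      have hnn : (0:ℝ) ≤ 2 * ((2*m).choose (2*j') : ℝ) * (a j)^(2*(m-j')) :=
        mul_nonneg (by positivity) ((even_two_mul (m-j')).pow_nonneg _)
      exact mul_le_mul_of_nonneg_left (ih j') hnn
    refine le_trans (Finset.sum_le_sum step) ?_
    have card_eq : (insert j A).card = A.card + 1 := Finset.card_insert_of_notMem hj
    have sum_eq : ∑ i ∈ insert j A, (a i)^2 = S + (a j)^2 := by
      rw [Finset.sum_insert hj]; ring
    rw [card_eq, sum_eq, add_pow, Finset.mul_sum]
    apply Finset.sum_le_sum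
    intro j' hj'
    rw [Finset.mem_range] at hj'
    have hj'm : j' ≤ m := by omega
    have hnat : (2*m).choose (2*j') * Dfac j' ≤ Dfac m * m.choose j' := by
      have h1 := choose_mul_Dfac_le (Nat.sub_le m j')
      have e4 : 2*(m - j') = 2*m - 2*j' := by omega
      have e5 : m - (m - j') = j' := by omega
      rw [e4, e5, Nat.choose_symm (by omega : 2*j' ≤ 2*m), Nat.choose_symm hj'm] at h1
      exact h1
    have hjunk : (0:ℝ) ≤ 2^(A.card+1) * (a j)^(2*(m-j')) * S^(j') :=
      mul_nonneg (mul_nonneg (by positivity) ((even_two_mul (m-j')).pow_nonneg _)) (pow_nonneg hSnn _)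
    calc 2 * ((2*m).choose (2*j') : ℝ) * (a j)^(2*(m-j')) * (2 ^ A.card * Dfac j' * S ^ j')
        = (((2*m).choose (2*j') * Dfac j' : ℕ) : ℝ)
            * (2^(A.card+1) * (a j)^(2*(m-j')) * S^(j')) := by push_cast; ring
      _ ≤ ((Dfac m * m.choose j' : ℕ) : ℝ)
            * (2^(A.card+1) * (a j)^(2*(m-j')) * S^(j')) :=
          mul_le_mul_of_nonneg_right (by exact_mod_cast hnat) hjunk
      _ = 2 ^ (A.card+1) * (Dfac m : ℝ) * (S ^ j' * ((a j)^2)^(m - j') * (m.choose j' : ℝ)) := by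
          push_cast
          rw [← pow_mul]
          ring

/-- full real inequality with the n-powers -/
lemma W_full {n k : ℕ} (hn : 1 ≤ n) (hk : 1 ≤ k) {t : ℝ} (ht0 : 0 ≤ t) (ht1 : t ≤ 1) :
    ((Dfac k : ℝ)/(n:ℝ)^k) ^ (1-t) * ((Dfac (k+1) : ℝ)/(n:ℝ)^(k+1)) ^ t
      ≤ ((2*(k:ℝ)+2*t-1)/(n:ℝ)) ^ ((k:ℝ)+t) := by
  have hnpos : (0:ℝ) < n := by exact_mod_cast hn
  have hD : (0:ℝ) ≤ (Dfac k : ℝ) := Nat.cast_nonneg _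
  have hD' : (0:ℝ) ≤ (Dfac (k+1) : ℝ) := Nat.cast_nonneg _
  have hbase : (0:ℝ) < 2*(k:ℝ)+2*t-1 := by
    have : (1:ℝ) ≤ (k:ℝ) := by exact_mod_cast hk
    linarith
  rw [Real.div_rpow hD (by positivity), Real.div_rpow hD' (by positivity),
    Real.div_rpow hbase.le hnpos.le]
  rw [div_mul_div_comm]
  apply div_le_div₀ (by positivity)
  · exact W_coeff hk ht0 ht1
  · positivity
  · -- n^{k(1-t)} * n^{(k+1)t} = n^{k+t}
    have e1 : ((n:ℝ)^k) ^ (1-t) = (n:ℝ) ^ ((k:ℝ)*(1-t)) := by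
      rw [← Real.rpow_natCast (n:ℝ) k, ← Real.rpow_mul hnpos.le]
    have e2 : ((n:ℝ)^(k+1)) ^ t = (n:ℝ) ^ (((k:ℝ)+1)*t) := by
      rw [← Real.rpow_natCast (n:ℝ) (k+1), ← Real.rpow_mul hnpos.le]
      push_cast; ring_nf
    rw [e1, e2, ← Real.rpow_add hnpos]
    have e3 : (k:ℝ)*(1-t) + ((k:ℝ)+1)*t = (k:ℝ)+t := by ring
    rw [e3]


/-- The `ℓ_r` (Hölder) norm of a vector of `EuclideanSpace ℝ (Fin n)`, for `r : ℝ≥0∞`. -/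
noncomputable def lpNorm (n : ℕ) (r : ℝ≥0∞) (v : EuclideanSpace ℝ (Fin n)) : ℝ :=
  ‖(WithLp.equiv r (Fin n → ℝ)).symm (fun i => v i)‖

lemma lpNorm_nonneg (n : ℕ) (r : ℝ≥0∞) (v : EuclideanSpace ℝ (Fin n)) :
    0 ≤ lpNorm n r v := by
  rcases eq_or_ne r 0 with rfl | h0
  · rw [_root_.lpNorm, PiLp.norm_eq_card]; positivity
  rcases eq_or_ne r ∞ with rfl | htop
  · rw [_root_.lpNorm, PiLp.norm_eq_ciSup]; exact Real.iSup_nonneg fun i => norm_nonneg _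
  · rw [_root_.lpNorm, PiLp.norm_eq_sum (ENNReal.toReal_pos h0 htop)]; positivity

lemma lpNorm_eq_sum {n : ℕ} {p : ℝ} (hp : 0 < p) (v : EuclideanSpace ℝ (Fin n)) :
    lpNorm n (ENNReal.ofReal p) v = (∑ i, |v i| ^ p) ^ (1/p) := by
  have htr : (ENNReal.ofReal p).toReal = p := ENNReal.toReal_ofReal hp.le
  rw [_root_.lpNorm, PiLp.norm_eq_sum (by rw [htr]; exact hp)]
  rw [htr]
  simp [Real.norm_eq_abs]

lemma lpNorm_eq_sup {n : ℕ} (hn : 0 < n) (v : EuclideanSpace ℝ (Fin n)) :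
    lpNorm n ∞ v = ⨆ i, |v i| := by
  rw [_root_.lpNorm, PiLp.norm_eq_ciSup]
  apply iSup_congr
  intro i
  simp [Real.norm_eq_abs]

/-- monotonicity: for 1 ≤ r ≤ q, ‖v‖_q ≤ ‖v‖_r -/
lemma lpNorm_anti {n : ℕ} (hn : 0 < n) {r : ℝ} (hr : 1 ≤ r) {q : ℝ≥0∞}
    (hq : ENNReal.ofReal r ≤ q) (v : EuclideanSpace ℝ (Fin n)) :
    lpNorm n q v ≤ lpNorm n (ENNReal.ofReal r) v := by
  have hr0 : 0 < r := by linarith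
  set C := lpNorm n (ENNReal.ofReal r) v with hC
  have hCnn : 0 ≤ C := lpNorm_nonneg _ _ _
  have hCr : C ^ r = ∑ i, |v i| ^ r := by
    rw [hC, lpNorm_eq_sum hr0, ← Real.rpow_mul (Finset.sum_nonneg fun i _ => Real.rpow_nonneg (abs_nonneg _) r), one_div_mul_cancel hr0.ne', Real.rpow_one]
  have hcoord : ∀ i, |v i| ≤ C := by
    intro i
    have h1 : |v i| ^ r ≤ C ^ r := by
      rw [hCr]
      exact Finset.single_le_sum (fun j _ => Real.rpow_nonneg (abs_nonneg _) r)
        (Finset.mem_univ i)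
    calc |v i| = (|v i| ^ r) ^ (1/r) := by
          rw [← Real.rpow_mul (abs_nonneg _), mul_one_div, div_self hr0.ne', Real.rpow_one]
      _ ≤ (C ^ r) ^ (1/r) := Real.rpow_le_rpow (Real.rpow_nonneg (abs_nonneg _) r) h1 (by positivity)
      _ = C := by rw [← Real.rpow_mul hCnn, mul_one_div, div_self hr0.ne', Real.rpow_one]
  rcases eq_or_ne q ∞ with rfl | hfin
  · rw [lpNorm_eq_sup hn]
    haveI : Nonempty (Fin n) := Fin.pos_iff_nonempty.1 hn
    exact ciSup_le hcoord
  · -- finite q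
    set s := q.toReal with hs
    have hs_pos : 0 < s := ENNReal.toReal_pos (by
      intro h0; rw [h0] at hq; simp [ENNReal.ofReal_eq_zero] at hq; linarith) hfin
    have hrs : r ≤ s := by
      rw [hs]
      rw [ENNReal.ofReal_le_iff_le_toReal hfin] at hq
      exact hq
    have hq_eq : q = ENNReal.ofReal s := by rw [hs, ENNReal.ofReal_toReal hfin]
    rw [hq_eq, lpNorm_eq_sum hs_pos]
    have hbound : ∑ i, |v i| ^ s ≤ C ^ s := by
      have hterm : ∀ i : Fin n, |v i| ^ s ≤ C ^ (s - r) * |v i| ^ r := by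
        intro i
        rcases eq_or_lt_of_le (abs_nonneg (v i)) with h0 | hpos
        · rw [← h0, Real.zero_rpow hs_pos.ne', Real.zero_rpow hr0.ne', mul_zero]
        · calc |v i| ^ s = |v i| ^ (s - r) * |v i| ^ r := by
                rw [← Real.rpow_add hpos]; ring_nf
            _ ≤ C ^ (s - r) * |v i| ^ r := by
                apply mul_le_mul_of_nonneg_right _ (Real.rpow_nonneg (abs_nonneg _) r)
                exact Real.rpow_le_rpow (abs_nonneg _) (hcoord i) (by linarith)
      calc ∑ i, |v i| ^ s ≤ ∑ i, C ^ (s - r) * |v i| ^ r :=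
            Finset.sum_le_sum fun i _ => hterm i
        _ = C ^ (s - r) * ∑ i, |v i| ^ r := by rw [Finset.mul_sum]
        _ = C ^ (s - r) * C ^ r := by rw [hCr]
        _ = C ^ s := by
            rcases eq_or_lt_of_le hCnn with h0 | hpos
            · rw [← h0, Real.zero_rpow hr0.ne', mul_zero, Real.zero_rpow hs_pos.ne']
            · rw [← Real.rpow_add hpos]; ring_nf
    calc (∑ i, |v i| ^ s) ^ (1/s) ≤ (C ^ s) ^ (1/s) :=
          Real.rpow_le_rpow (Finset.sum_nonneg fun i _ => Real.rpow_nonneg (abs_nonneg _) s)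
            hbound (by positivity)
      _ = C := by rw [← Real.rpow_mul hCnn, mul_one_div, div_self hs_pos.ne', Real.rpow_one]

lemma lpNorm_continuous_finite {p : ℝ} (hp : 0 < p) :
    Continuous (fun v : EuclideanSpace ℝ (Fin n) => lpNorm n (ENNReal.ofReal p) v) := by
  have : (fun v : EuclideanSpace ℝ (Fin n) => lpNorm n (ENNReal.ofReal p) v)
      = fun v => (∑ i, |v i| ^ p) ^ (1/p) := by
    funext v; exact lpNorm_eq_sum hp v
  rw [this]
  apply Continuous.rpow_const
  · apply continuous_finset_sum
    intro i _
    exact ((PiLp.continuous_apply 2 _ i).abs).rpow_const (fun v => Or.inr hp.le)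
  · intro v; right; positivity


/-- bounded on sphere -/
lemma lpNorm_sq_le_on_sphere {n : ℕ} {r : ℝ} (hr : 1 ≤ r) (v : EuclideanSpace ℝ (Fin n))
    (hv : ∑ j, (v j)^2 = 1) (hn : 1 ≤ n) :
    lpNorm n (ENNReal.ofReal r) v ^ 2 ≤ (n:ℝ)^2 := by
  have hr0 : 0 < r := by linarith
  have hn1 : (1:ℝ) ≤ n := by exact_mod_cast hn
  have hcoord : ∀ i, |v i| ≤ 1 := by
    intro i
    have h1 : (v i)^2 ≤ 1 := by
      rw [← hv]
      exact Finset.single_le_sum (f := fun j => (v j)^2) (fun j _ => sq_nonneg _) (Finset.mem_univ i)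
    nlinarith [abs_nonneg (v i), sq_abs (v i)]
  have hbound : lpNorm n (ENNReal.ofReal r) v ≤ (n:ℝ) := by
    rw [lpNorm_eq_sum hr0]
    calc (∑ i, |v i| ^ r) ^ (1/r) ≤ ((n:ℝ)) ^ (1/r) := by
          apply Real.rpow_le_rpow (Finset.sum_nonneg fun i _ => Real.rpow_nonneg (abs_nonneg _) r)
            _ (by positivity)
          calc ∑ i, |v i| ^ r ≤ ∑ _i : Fin n, (1:ℝ) :=
                Finset.sum_le_sum fun i _ =>
                  Real.rpow_le_one (abs_nonneg _) (hcoord i) hr0.le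
            _ = n := by rw [Finset.sum_const, Finset.card_univ, Fintype.card_fin,
                  nsmul_eq_mul, mul_one]
      _ ≤ (n:ℝ) := by
          nth_rewrite 2 [← Real.rpow_one (n:ℝ)]
          apply Real.rpow_le_rpow_of_exponent_le hn1
          rw [div_le_one hr0]; linarith
  exact pow_le_pow_left₀ (lpNorm_nonneg _ _ _) hbound 2


section Meas
variable {n : ℕ} {μ : Measure (EuclideanSpace ℝ (Fin n))} [IsProbabilityMeasure μ]

lemma ae_norm_one_s15 (hsupp : μ (Metric.sphere (0 : EuclideanSpace ℝ (Fin n)) 1)ᶜ = 0) :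
    ∀ᵐ x ∂μ, ‖x‖ = 1 := by
  have : {x : EuclideanSpace ℝ (Fin n) | ¬ ‖x‖ = 1} ⊆ (Metric.sphere (0 : EuclideanSpace ℝ (Fin n)) 1)ᶜ := by
    intro x hx hx'
    rw [Metric.mem_sphere, dist_zero_right] at hx'
    exact hx hx'
  exact measure_mono_null this hsupp

lemma ae_sum_sq (hsupp : μ (Metric.sphere (0 : EuclideanSpace ℝ (Fin n)) 1)ᶜ = 0) :
    ∀ᵐ x ∂μ, ∑ j, (x j)^2 = 1 := by
  filter_upwards [ae_norm_one_s15 hsupp] with x hx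
  have h := EuclideanSpace.norm_eq x
  rw [hx] at h
  have h2 : √(∑ j, ‖x j‖^2) = 1 := h.symm
  have h3 : ∑ j, ‖x j‖^2 = 1 := by
    have hnn : 0 ≤ ∑ j, ‖x j‖^2 := Finset.sum_nonneg fun j _ => sq_nonneg _
    nlinarith [Real.sq_sqrt hnn, Real.sqrt_nonneg (∑ j, ‖x j‖^2)]
  simpa [Real.norm_eq_abs, sq_abs] using h3

lemma integrable_inner_pow (hsupp : μ (Metric.sphere (0 : EuclideanSpace ℝ (Fin n)) 1)ᶜ = 0)
    (c : EuclideanSpace ℝ (Fin n)) (m : ℕ) :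
    Integrable (fun x => (inner ℝ c x : ℝ)^m) μ := by
  apply Integrable.mono' (integrable_const (‖c‖^m))
  · exact ((continuous_const.inner continuous_id).pow m).aestronglyMeasurable
  · filter_upwards [ae_norm_one_s15 hsupp] with x hx
    rw [Real.norm_eq_abs, abs_pow]
    apply pow_le_pow_left₀ (abs_nonneg _)
    calc |(inner ℝ c x : ℝ)| ≤ ‖c‖ * ‖x‖ := abs_real_inner_le_norm c x
      _ = ‖c‖ := by rw [hx, mul_one]

lemma coord_eq_inner (i : Fin n) (x : EuclideanSpace ℝ (Fin n)) :
    x i = (inner ℝ (EuclideanSpace.single i (1:ℝ)) x : ℝ) := by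
  rw [EuclideanSpace.inner_single_left]; simp

lemma inner_pow_integral_eq
    (hinv : ∀ T : EuclideanSpace ℝ (Fin n) ≃ₗᵢ[ℝ] EuclideanSpace ℝ (Fin n),
      Measure.map T μ = μ)
    (c : EuclideanSpace ℝ (Fin n)) (hc : ‖c‖ = 1) (i : Fin n) (m : ℕ) :
    ∫ x, (inner ℝ c x : ℝ)^m ∂μ = ∫ x, (x i)^m ∂μ := by
  set E1 := EuclideanSpace.single i (1:ℝ) with hE1def
  have hE1 : ‖E1‖ = 1 := by rw [hE1def, EuclideanSpace.norm_single]; norm_num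
  set T := Submodule.reflection (Submodule.span ℝ {c - E1})ᗮ with hTdef
  have hT : T c = E1 := Submodule.reflection_sub (by rw [hc, hE1])
  have key : ∀ x, (inner ℝ c x : ℝ)^m = ((T x) i)^m := by
    intro x
    have h1 : (inner ℝ c x : ℝ) = (inner ℝ E1 (T x) : ℝ) := by
      rw [← hT]; exact (T.inner_map_map c x).symm
    rw [h1, coord_eq_inner i (T x)]
  have hmeas : AEStronglyMeasurable (fun y : EuclideanSpace ℝ (Fin n) => (y i)^m)
      (Measure.map T μ) := by
    exact ((PiLp.continuous_apply 2 _ i).pow m).aestronglyMeasurable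
  calc ∫ x, (inner ℝ c x : ℝ)^m ∂μ = ∫ x, ((T x) i)^m ∂μ := by simp_rw [key]
    _ = ∫ y, (y i)^m ∂(Measure.map T μ) :=
        (integral_map (T.continuous.measurable.aemeasurable) hmeas).symm
    _ = ∫ y, (y i)^m ∂μ := by rw [hinv T]


/-- the sign vectors (±1/√n) -/
noncomputable def signVec (n : ℕ) (s : Finset (Fin n)) : EuclideanSpace ℝ (Fin n) :=
  WithLp.toLp 2 (fun j => (if j ∈ s then -1 else 1) / √(n : ℝ))

lemma signVec_norm (hn : 0 < n) (s : Finset (Fin n)) : ‖signVec n s‖ = 1 := by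
  rw [EuclideanSpace.norm_eq]
  have h : ∀ j : Fin n, ‖signVec n s j‖^2 = 1 / (n : ℝ) := by
    intro j
    rw [Real.norm_eq_abs, sq_abs, signVec]
    rcases em (j ∈ s) with h | h <;>
      simp [h, div_pow, Real.sq_sqrt (Nat.cast_nonneg n)]
  simp_rw [h]
  rw [Finset.sum_const, Finset.card_univ, Fintype.card_fin, nsmul_eq_mul]
  rw [mul_one_div, div_self (by exact_mod_cast hn.ne'), Real.sqrt_one]

lemma signVec_inner (hn : 0 < n) (s : Finset (Fin n)) (x : EuclideanSpace ℝ (Fin n)) :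
    (inner ℝ (signVec n s) x : ℝ)
      = (∑ j, (if j ∈ s then -1 else 1) * x j) / √(n:ℝ) := by
  rw [PiLp.inner_apply]
  rw [Finset.sum_div]
  apply Finset.sum_congr rfl
  intro j _
  simp only [signVec, PiLp.toLp_apply, RCLike.inner_apply, starRingEnd_apply, star_trivial]
  ring

/-- Main moment bound: ∫ x_i^{2m} dμ ≤ Dfac m / n^m -/
lemma moment_bound (hn : 0 < n)
    (hsupp : μ (Metric.sphere (0 : EuclideanSpace ℝ (Fin n)) 1)ᶜ = 0)
    (hinv : ∀ T : EuclideanSpace ℝ (Fin n) ≃ₗᵢ[ℝ] EuclideanSpace ℝ (Fin n),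
      Measure.map T μ = μ)
    (i : Fin n) (m : ℕ) :
    ∫ x, (x i)^(2*m) ∂μ ≤ (Dfac m : ℝ) / (n:ℝ)^m := by
  set P := (Finset.univ : Finset (Fin n)).powerset with hP
  have hcard : (P.card : ℝ) = 2^n := by
    rw [hP, Finset.card_powerset, Finset.card_univ, Fintype.card_fin]; push_cast; ring
  have h1 : ∀ s ∈ P, ∫ x, (inner ℝ (signVec n s) x : ℝ)^(2*m) ∂μ = ∫ x, (x i)^(2*m) ∂μ :=
    fun s _ => inner_pow_integral_eq hinv _ (signVec_norm hn s) i (2*m)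
  have h2 : (2:ℝ)^n * ∫ x, (x i)^(2*m) ∂μ
      = ∫ x, (∑ s ∈ P, (inner ℝ (signVec n s) x : ℝ)^(2*m)) ∂μ := by
    rw [integral_finset_sum P (fun s _ => integrable_inner_pow hsupp _ _)]
    rw [Finset.sum_congr rfl h1, Finset.sum_const, nsmul_eq_mul, hcard]
  have h3 : ∀ᵐ x ∂μ, (∑ s ∈ P, (inner ℝ (signVec n s) x : ℝ)^(2*m))
      ≤ 2^n * (Dfac m : ℝ) / (n:ℝ)^m := by
    filter_upwards [ae_sum_sq hsupp] with x hx
    have hpt : ∀ s ∈ P, (inner ℝ (signVec n s) x : ℝ)^(2*m)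
        = (∑ j, (if j ∈ s then -1 else 1) * x j)^(2*m) / (n:ℝ)^m := by
      intro s _
      rw [signVec_inner hn s x, div_pow, pow_mul, pow_mul,
        Real.sq_sqrt (Nat.cast_nonneg n)]
    rw [Finset.sum_congr rfl hpt, ← Finset.sum_div]
    rw [div_le_div_iff_of_pos_right (by positivity)]
    calc ∑ s ∈ P, (∑ j, (if j ∈ s then -1 else 1) * x j)^(2*m)
        ≤ 2 ^ (Finset.univ : Finset (Fin n)).card * Dfac m * (∑ j, (x j)^2) ^ m :=
          khintchine Finset.univ x m
      _ = 2^n * (Dfac m : ℝ) := by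
          rw [hx, Finset.card_univ, Fintype.card_fin]; ring
  have h4 : ∫ x, (∑ s ∈ P, (inner ℝ (signVec n s) x : ℝ)^(2*m)) ∂μ
      ≤ 2^n * (Dfac m : ℝ) / (n:ℝ)^m := by
    calc ∫ x, (∑ s ∈ P, (inner ℝ (signVec n s) x : ℝ)^(2*m)) ∂μ
        ≤ ∫ _x, 2^n * (Dfac m : ℝ) / (n:ℝ)^m ∂μ := by
          apply integral_mono_of_nonneg
          · filter_upwards with x
            exact Finset.sum_nonneg fun s _ => by
              rw [pow_mul]; exact pow_nonneg (sq_nonneg _) m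
          · exact integrable_const _
          · exact h3
      _ = 2^n * (Dfac m : ℝ) / (n:ℝ)^m := by
          rw [integral_const]; simp
  have hpow : (0:ℝ) < 2^n := by positivity
  have h5 : (2:ℝ)^n * ∫ x, (x i)^(2*m) ∂μ ≤ 2^n * ((Dfac m : ℝ) / (n:ℝ)^m) := by
    rw [h2, ← mul_div_assoc]; exact h4
  exact le_of_mul_le_mul_left h5 hpow


lemma integrable_coord_pow
    (hsupp : μ (Metric.sphere (0 : EuclideanSpace ℝ (Fin n)) 1)ᶜ = 0)
    (i : Fin n) (m : ℕ) : Integrable (fun x => (x i)^m) μ := by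
  have := integrable_inner_pow hsupp (EuclideanSpace.single i (1:ℝ)) m
  apply this.congr
  filter_upwards with x
  rw [← coord_eq_inner]

/-- lintegral moment bound -/
lemma lmoment (hn : 0 < n)
    (hsupp : μ (Metric.sphere (0 : EuclideanSpace ℝ (Fin n)) 1)ᶜ = 0)
    (hinv : ∀ T : EuclideanSpace ℝ (Fin n) ≃ₗᵢ[ℝ] EuclideanSpace ℝ (Fin n),
      Measure.map T μ = μ)
    (i : Fin n) (m : ℕ) :
    ∫⁻ x, (ENNReal.ofReal |x i|) ^ (2*m : ℕ) ∂μ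
      ≤ ENNReal.ofReal ((Dfac m : ℝ)/(n:ℝ)^m) := by
  have hpt : ∀ x : EuclideanSpace ℝ (Fin n),
      (ENNReal.ofReal |x i|) ^ (2*m : ℕ) = ENNReal.ofReal ((x i)^(2*m)) := by
    intro x
    rw [← ENNReal.ofReal_pow (abs_nonneg _), (even_two_mul m).pow_abs]
  simp_rw [hpt]
  rw [← ofReal_integral_eq_lintegral_ofReal (integrable_coord_pow hsupp i (2*m))
    (by filter_upwards with x; rw [pow_mul]; exact pow_nonneg (sq_nonneg _) m)]
  exact ENNReal.ofReal_le_ofReal (moment_bound hn hsupp hinv i m)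

/-- per-coordinate bound -/
lemma percoord (hn : 0 < n)
    (hsupp : μ (Metric.sphere (0 : EuclideanSpace ℝ (Fin n)) 1)ᶜ = 0)
    (hinv : ∀ T : EuclideanSpace ℝ (Fin n) ≃ₗᵢ[ℝ] EuclideanSpace ℝ (Fin n),
      Measure.map T μ = μ)
    (i : Fin n) {p : ℝ} (hp : 2 ≤ p) :
    ∫⁻ x, (ENNReal.ofReal |x i|) ^ p ∂μ
      ≤ ENNReal.ofReal (((p-1)/(n:ℝ)) ^ (p/2)) := by
  set k : ℕ := ⌊p/2⌋₊ with hk_def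
  set t : ℝ := p/2 - k with ht_def
  have hp2 : (1:ℝ) ≤ p/2 := by linarith
  have hk1 : 1 ≤ k := Nat.le_floor (by exact_mod_cast hp2)
  have ht0 : 0 ≤ t := sub_nonneg.2 (Nat.floor_le (by linarith))
  have ht1 : t < 1 := by
    have := Nat.lt_floor_add_one (p/2)
    rw [ht_def]; push_cast; linarith
  have hkt : (k:ℝ) + t = p/2 := by rw [ht_def]; ring
  have hmeas : ∀ m : ℕ, Measurable (fun x : EuclideanSpace ℝ (Fin n) =>
      (ENNReal.ofReal |x i|) ^ (m : ℕ)) := by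
    intro m
    exact (((PiLp.continuous_apply 2 _ i).abs.measurable).ennreal_ofReal).pow_const m
  -- pointwise splitting
  have hsplit : ∀ x : EuclideanSpace ℝ (Fin n),
      (ENNReal.ofReal |x i|) ^ p
        = ((ENNReal.ofReal |x i|) ^ (2*k : ℕ)) ^ (1-t)
          * ((ENNReal.ofReal |x i|) ^ (2*k+2 : ℕ)) ^ t := by
    intro x
    rw [← ENNReal.rpow_natCast _ (2*k), ← ENNReal.rpow_natCast _ (2*k+2),
      ← ENNReal.rpow_mul, ← ENNReal.rpow_mul,
      ← ENNReal.rpow_add_of_nonneg _ _ (mul_nonneg (by positivity) (by linarith)) (mul_nonneg (by positivity) ht0)]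
    congr 1
    push_cast
    rw [ht_def]; ring
  simp_rw [hsplit]
  calc ∫⁻ x, ((ENNReal.ofReal |x i|) ^ (2*k : ℕ)) ^ (1-t)
          * ((ENNReal.ofReal |x i|) ^ (2*k+2 : ℕ)) ^ t ∂μ
      ≤ (∫⁻ x, (ENNReal.ofReal |x i|) ^ (2*k : ℕ) ∂μ) ^ (1-t)
          * (∫⁻ x, (ENNReal.ofReal |x i|) ^ (2*k+2 : ℕ) ∂μ) ^ t :=
        ENNReal.lintegral_mul_norm_pow_le (hmeas _).aemeasurable
          (hmeas _).aemeasurable (by linarith) ht0 (by ring)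
    _ ≤ (ENNReal.ofReal ((Dfac k : ℝ)/(n:ℝ)^k)) ^ (1-t)
          * (ENNReal.ofReal ((Dfac (k+1) : ℝ)/(n:ℝ)^(k+1))) ^ t := by
        apply mul_le_mul'
        · exact ENNReal.rpow_le_rpow (lmoment hn hsupp hinv i k) (by linarith)
        · have h2 : 2*(k+1) = 2*k+2 := by ring
          exact ENNReal.rpow_le_rpow (h2 ▸ lmoment hn hsupp hinv i (k+1)) ht0
    _ = ENNReal.ofReal (((Dfac k : ℝ)/(n:ℝ)^k) ^ (1-t)
          * ((Dfac (k+1) : ℝ)/(n:ℝ)^(k+1)) ^ t) := by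
        rw [ENNReal.ofReal_rpow_of_nonneg (by positivity) (by linarith : (0:ℝ) ≤ 1-t),
          ENNReal.ofReal_rpow_of_nonneg (by positivity) ht0,
          ← ENNReal.ofReal_mul (by positivity)]
    _ ≤ ENNReal.ofReal (((p-1)/(n:ℝ)) ^ (p/2)) := by
        apply ENNReal.ofReal_le_ofReal
        have he : 2*(k:ℝ)+2*t-1 = p-1 := by
          rw [ht_def]; push_cast; ring
        have hw := W_full (n := n) (by omega) hk1 ht0 ht1.le
        rw [he, hkt] at hw
        exact hw


/-- Core bound: for real 2 ≤ p,  ∫ ‖x‖_p² dμ ≤ (p-1) n^{2/p-1}. -/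
theorem coreK (hn : 0 < n)
    (hsupp : μ (Metric.sphere (0 : EuclideanSpace ℝ (Fin n)) 1)ᶜ = 0)
    (hinv : ∀ T : EuclideanSpace ℝ (Fin n) ≃ₗᵢ[ℝ] EuclideanSpace ℝ (Fin n),
      Measure.map T μ = μ)
    {p : ℝ} (hp : 2 ≤ p) :
    ∫ x, (lpNorm n (ENNReal.ofReal p) x)^2 ∂μ ≤ (p-1) * (n:ℝ) ^ (2/p - 1) := by
  have hp0 : 0 < p := by linarith
  have hnR : (0:ℝ) < n := by exact_mod_cast hn
  -- convert to lintegral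
  have hnonneg : 0 ≤ᵐ[μ] fun x => (lpNorm n (ENNReal.ofReal p) x)^2 := by
    filter_upwards with x; exact sq_nonneg _
  have hmeas : AEStronglyMeasurable (fun x => (lpNorm n (ENNReal.ofReal p) x)^2) μ :=
    ((lpNorm_continuous_finite hp0).pow 2).aestronglyMeasurable
  rw [integral_eq_lintegral_of_nonneg_ae hnonneg hmeas]
  -- pointwise identity
  have hpt : ∀ x : EuclideanSpace ℝ (Fin n),
      ENNReal.ofReal ((lpNorm n (ENNReal.ofReal p) x)^2)
        = (∑ i, (ENNReal.ofReal |x i|) ^ p) ^ (2/p) := by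
    intro x
    have hS : (0:ℝ) ≤ ∑ i, |x i| ^ p :=
      Finset.sum_nonneg fun i _ => Real.rpow_nonneg (abs_nonneg _) p
    have h1 : (lpNorm n (ENNReal.ofReal p) x)^2 = (∑ i, |x i| ^ p) ^ (2/p) := by
      rw [lpNorm_eq_sum hp0, ← Real.rpow_natCast (((∑ i, |x i| ^ p)) ^ (1/p)) 2,
        ← Real.rpow_mul hS]
      norm_num
      rw [show p⁻¹ * 2 = 2/p by ring]
    rw [h1, ← ENNReal.ofReal_rpow_of_nonneg hS (by positivity),
      ENNReal.ofReal_sum_of_nonneg (fun i _ => Real.rpow_nonneg (abs_nonneg _) p)]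
    congr 1
    apply Finset.sum_congr rfl
    intro i _
    rw [ENNReal.ofReal_rpow_of_nonneg (abs_nonneg _) hp0.le]
  simp_rw [hpt]
  -- Jensen step
  have hGmeas : Measurable (fun x : EuclideanSpace ℝ (Fin n) =>
      ∑ i, (ENNReal.ofReal |x i|) ^ p) := by
    apply Finset.measurable_sum
    intro i _
    exact (((PiLp.continuous_apply 2 _ i).abs.measurable).ennreal_ofReal).pow_const p
  have hexp1 : (0:ℝ) ≤ 1 - 2/p := by
    rw [sub_nonneg, div_le_one hp0]; linarith
  have jensen : ∫⁻ x, (∑ i, (ENNReal.ofReal |x i|) ^ p) ^ (2/p) ∂μ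
      ≤ (∫⁻ x, (∑ i, (ENNReal.ofReal |x i|) ^ p) ∂μ) ^ (2/p) := by
    have h := ENNReal.lintegral_mul_norm_pow_le (μ := μ)
      hGmeas.aemeasurable (aemeasurable_const (b := (1:ℝ≥0∞)))
      (by positivity : (0:ℝ) ≤ 2/p) hexp1 (by ring)
    simp only [ENNReal.one_rpow, mul_one, lintegral_const, measure_univ, one_mul] at h
    exact h
  -- sum of coordinates
  have hsum : ∫⁻ x, (∑ i, (ENNReal.ofReal |x i|) ^ p) ∂μ
      ≤ ENNReal.ofReal ((n:ℝ) * ((p-1)/(n:ℝ)) ^ (p/2)) := by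
    rw [lintegral_finset_sum (μ := μ)
      (f := fun (i : Fin n) (x : EuclideanSpace ℝ (Fin n)) => (ENNReal.ofReal |x i|) ^ p) _
      (fun i _ => (((PiLp.continuous_apply 2 _ i).abs.measurable).ennreal_ofReal).pow_const p)]
    calc ∑ i : Fin n, ∫⁻ x, (ENNReal.ofReal |x i|) ^ p ∂μ
        ≤ ∑ _i : Fin n, ENNReal.ofReal (((p-1)/(n:ℝ)) ^ (p/2)) :=
          Finset.sum_le_sum fun i _ => percoord hn hsupp hinv i hp
      _ = (n : ℝ≥0∞) * ENNReal.ofReal (((p-1)/(n:ℝ)) ^ (p/2)) := by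
          rw [Finset.sum_const, Finset.card_univ, Fintype.card_fin, nsmul_eq_mul]
      _ = ENNReal.ofReal ((n:ℝ) * ((p-1)/(n:ℝ)) ^ (p/2)) := by
          rw [ENNReal.ofReal_mul (by positivity), ENNReal.ofReal_natCast]
  -- real arithmetic
  have harith : ((n:ℝ) * ((p-1)/(n:ℝ)) ^ (p/2)) ^ (2/p) = (p-1) * (n:ℝ) ^ (2/p - 1) := by
    have hp1 : (0:ℝ) < p - 1 := by linarith
    rw [Real.mul_rpow hnR.le (Real.rpow_nonneg (by positivity) _),
      ← Real.rpow_mul (by positivity : (0:ℝ) ≤ (p-1)/(n:ℝ)),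
      (by field_simp : p/2 * (2/p) = 1), Real.rpow_one,
      Real.rpow_sub hnR, Real.rpow_one]
    field_simp
  have hc1 : (0:ℝ) ≤ (n:ℝ) * ((p-1)/(n:ℝ)) ^ (p/2) := by
    have hp1 : (0:ℝ) ≤ p - 1 := by linarith
    positivity
  have hc2 : (0:ℝ) ≤ 2/p := div_nonneg (by norm_num) hp0.le
  have hc3 : (0:ℝ) ≤ (p-1) * (n:ℝ) ^ (2/p - 1) :=
    mul_nonneg (by linarith) (Real.rpow_nonneg hnR.le _)
  calc (∫⁻ x, (∑ i, (ENNReal.ofReal |x i|) ^ p) ^ (2/p) ∂μ).toReal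
      ≤ ((ENNReal.ofReal ((n:ℝ) * ((p-1)/(n:ℝ)) ^ (p/2))) ^ (2/p)).toReal := by
        apply ENNReal.toReal_mono
        · exact (ENNReal.rpow_ne_top_of_nonneg (div_nonneg (by norm_num) hp0.le) ENNReal.ofReal_ne_top)
        · exact le_trans jensen (ENNReal.rpow_le_rpow hsum (div_nonneg (by norm_num) hp0.le))
    _ = (p-1) * (n:ℝ) ^ (2/p - 1) := by
        rw [ENNReal.ofReal_rpow_of_nonneg hc1 hc2,
          harith, ENNReal.toReal_ofReal hc3]
end Meas

/-- For `e` uniform on the unit Euclidean sphere, `n ≥ 8` and `2 ≤ q ≤ ∞`,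
`E[‖e‖_q²] ≤ min{q−1, 16 ln n − 8}·n^{2/q−1}`. -/
theorem expectation_qnorm_sq_bound (n : ℕ) (hn : 8 ≤ n)
    (μ : Measure (EuclideanSpace ℝ (Fin n))) [IsProbabilityMeasure μ]
    (hsupp : μ (Metric.sphere (0 : EuclideanSpace ℝ (Fin n)) 1)ᶜ = 0)
    (hinv : ∀ T : EuclideanSpace ℝ (Fin n) ≃ₗᵢ[ℝ] EuclideanSpace ℝ (Fin n),
      Measure.map T μ = μ)
    (q : ℝ≥0∞) (hq : 2 ≤ q) :
    ∫ e, lpNorm n q e ^ 2 ∂μ ≤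
      (min (q - 1) (ENNReal.ofReal (16 * Real.log n - 8))).toReal *
        (n : ℝ) ^ ((2 / q).toReal - 1) := by
  have hn0 : 0 < n := by omega
  have hn1 : (1:ℝ) ≤ n := by exact_mod_cast hn0
  have hn8 : (8:ℝ) ≤ n := by exact_mod_cast hn
  set L := Real.log n with hL_def
  have hL : 2.079 ≤ L := by
    have h8 : Real.log 8 ≤ L := Real.log_le_log (by norm_num) hn8
    have h2 : Real.log 8 = 3 * Real.log 2 := by
      rw [show (8:ℝ) = 2^3 by norm_num, Real.log_pow]; push_cast; ring
    have := Real.log_two_gt_d9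
    rw [h2] at h8
    linarith
  have hB_nonneg : (0:ℝ) ≤ 16 * L - 8 := by linarith
  -- the one-hypothesis form of goal for each branch
  rcases le_total (q - 1) (ENNReal.ofReal (16 * L - 8)) with hAB | hBA
  · -- min = q - 1, q finite
    rw [min_eq_left hAB]
    have hqfin : q ≠ ∞ := by
      intro h
      rw [h] at hAB
      have : (⊤ : ℝ≥0∞) - 1 = ⊤ := by simp
      rw [this] at hAB
      exact (ENNReal.ofReal_ne_top) (top_le_iff.1 hAB)
    set p := q.toReal with hp_def
    have hp2 : 2 ≤ p := by
      have := (ENNReal.toReal_le_toReal (by norm_num) hqfin).2 hq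
      simpa using this
    have hq_eq : q = ENNReal.ofReal p := (ENNReal.ofReal_toReal hqfin).symm
    have h1 : (q - 1).toReal = p - 1 := by
      rw [ENNReal.toReal_sub_of_le (le_trans (by norm_num) hq) hqfin]
      simp [hp_def]
    have h2 : (2 / q).toReal = 2 / p := by
      rw [ENNReal.toReal_div]; norm_num [hp_def]
    rw [h1, h2, hq_eq]
    exact coreK hn0 hsupp hinv hp2
  · -- min = B = ofReal (16L - 8)
    rw [min_eq_right hBA, ENNReal.toReal_ofReal hB_nonneg]
    have hrexp : (n:ℝ) ^ (-1 : ℝ) ≤ (n:ℝ) ^ ((2/q).toReal - 1) := by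
      apply Real.rpow_le_rpow_of_exponent_le hn1
      have : (0:ℝ) ≤ (2/q).toReal := ENNReal.toReal_nonneg
      linarith
    rcases le_total q (ENNReal.ofReal (4 * L)) with hq4 | hq4
    · -- q ≤ 4L: use coreK at p = q.toReal and p - 1 ≤ 16L - 8
      have hqfin : q ≠ ∞ := by
        intro h; rw [h] at hq4
        exact (ENNReal.ofReal_ne_top) (top_le_iff.1 hq4)
      set p := q.toReal with hp_def
      have hp2 : 2 ≤ p := by
        have := (ENNReal.toReal_le_toReal (by norm_num) hqfin).2 hq
        simpa using this
      have hq_eq : q = ENNReal.ofReal p := (ENNReal.ofReal_toReal hqfin).symm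
      have hp4 : p ≤ 4 * L := by
        have := ENNReal.toReal_mono ENNReal.ofReal_ne_top hq4
        rwa [ENNReal.toReal_ofReal (by linarith)] at this
      have h2 : (2 / q).toReal = 2 / p := by
        rw [ENNReal.toReal_div]; norm_num [hp_def]
      rw [h2, hq_eq]
      calc ∫ e, lpNorm n (ENNReal.ofReal p) e ^ 2 ∂μ
          ≤ (p-1) * (n:ℝ) ^ (2/p - 1) := coreK hn0 hsupp hinv hp2
        _ ≤ (16*L-8) * (n:ℝ) ^ (2/p - 1) := by
            apply mul_le_mul_of_nonneg_right _ (Real.rpow_nonneg (by linarith) _)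
            linarith
    · -- q ≥ 4L: compare with r = 4L
      set r := 4 * L with hr_def
      have hr2 : 2 ≤ r := by linarith
      have hr1 : 1 ≤ r := by linarith
      have hmono : ∀ᵐ e ∂μ, lpNorm n q e ^ 2 ≤ lpNorm n (ENNReal.ofReal r) e ^ 2 := by
        filter_upwards with e
        exact pow_le_pow_left₀ (lpNorm_nonneg _ _ _) (lpNorm_anti hn0 hr1 hq4 e) 2
      have hint : Integrable (fun e => lpNorm n (ENNReal.ofReal r) e ^ 2) μ := by
        apply Integrable.mono' (integrable_const ((n:ℝ)^2))
        · exact (((lpNorm_continuous_finite (by linarith : (0:ℝ) < r)).pow 2)).aestronglyMeasurable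
        · filter_upwards [ae_sum_sq hsupp] with e he
          rw [Real.norm_eq_abs, abs_of_nonneg (sq_nonneg _)]
          exact lpNorm_sq_le_on_sphere hr1 e he hn0
      have step1 : ∫ e, lpNorm n q e ^ 2 ∂μ
          ≤ ∫ e, lpNorm n (ENNReal.ofReal r) e ^ 2 ∂μ := by
        apply integral_mono_of_nonneg _ hint hmono
        filter_upwards with e; exact sq_nonneg _
      have step2 : ∫ e, lpNorm n (ENNReal.ofReal r) e ^ 2 ∂μ
          ≤ (r-1) * (n:ℝ) ^ (2/r - 1) := coreK hn0 hsupp hinv hr2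
      -- numeric: (r-1) * n^{2/r-1} ≤ (16L-8) * n^{-1} ≤ (16L-8)*n^{...}
      have hLpos : 0 < L := by linarith
      have hnpos : (0:ℝ) < n := by linarith
      have hhalf : (n:ℝ) ^ (2/r - 1) = Real.exp (1/2) * (n:ℝ)^(-1:ℝ) := by
        rw [Real.rpow_sub hnpos, Real.rpow_one]
        rw [Real.rpow_def_of_pos hnpos, ← hL_def]
        rw [show L * (2/r) = 1/2 by rw [hr_def]; field_simp; ring]
        rw [Real.rpow_neg hnpos.le, Real.rpow_one]
        ring
      have hexphalf : Real.exp (1/2) ≤ 1.6488 := by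
        nlinarith [Real.exp_one_lt_d9, Real.exp_pos (1/2:ℝ),
          Real.exp_add (1/2 : ℝ) (1/2 : ℝ), Real.exp_pos (1:ℝ)]
      have hnum : (r-1) * Real.exp (1/2) ≤ 16*L - 8 := by
        have h1 : (r-1) * Real.exp (1/2) ≤ (4*L-1) * 1.6488 := by
          apply mul_le_mul (by rw [hr_def]) hexphalf (Real.exp_pos _).le (by linarith)
        nlinarith
      have step3 : (r-1) * (n:ℝ) ^ (2/r - 1) ≤ (16*L-8) * (n:ℝ) ^ ((2/q).toReal - 1) := by
        rw [hhalf]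
        calc (r-1) * (Real.exp (1/2) * (n:ℝ)^(-1:ℝ))
            = ((r-1) * Real.exp (1/2)) * (n:ℝ)^(-1:ℝ) := by ring
          _ ≤ (16*L-8) * (n:ℝ)^(-1:ℝ) :=
              mul_le_mul_of_nonneg_right hnum (Real.rpow_nonneg hnpos.le _)
          _ ≤ (16*L-8) * (n:ℝ) ^ ((2/q).toReal - 1) :=
              mul_le_mul_of_nonneg_left hrexp hB_nonneg
      linarith [step1, step2, step3]
end

section
/- For a = (2 log n)/(2 log n − 1) with n ≥ 3, the function d(x) = (1/(2(a−1)))‖x‖_a² on R^n is 1-strongly convex with respect to the 1-norm, up to a universal constant; precisely, d is strongly convex with respect to ‖·‖_a with modulus 1, and since ‖x‖₁ ≤ n^{1−1/a}‖x‖_a with n^{1−1/a} bounded by a constant times 1 for this choice of a, d(y) ≥ d(x) + ⟨∇d(x), y − x⟩ + (c/2)‖y − x‖₁² for some absolute constant c > 0. -/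
open Real Finset Filter Topology



lemma bern_le {u β : ℝ} (hu : 0 ≤ u) (hb0 : 0 ≤ β) (hb1 : β ≤ 1) :
    (1 + u) ^ β ≤ 1 + β * u :=
  rpow_one_add_le_one_add_mul_self (by linarith) hb0 hb1

lemma B2 {p r : ℝ} (hp1 : 1 < p) (hp2 : p ≤ 2) (hr0 : 0 ≤ r) (hr1 : r ≤ 1) :
    1 - p * r + p * (p - 1) / 2 * r ^ 2 ≤ (1 - r) ^ p := by
  have hp0 : (0:ℝ) < p := lt_trans zero_lt_one hp1
  set f : ℝ → ℝ := fun y => y ^ p + p * (1 - y) - p * (p - 1) / 2 * (1 - y) ^ 2 with hf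
  have hder : ∀ y : ℝ, HasDerivAt f (p * y ^ (p - 1) - p + p * (p - 1) * (1 - y)) y := by
    intro y
    have h1 : HasDerivAt (fun y : ℝ => y ^ p) (p * y ^ (p - 1)) y :=
      Real.hasDerivAt_rpow_const (Or.inr hp1.le)
    have h2 : HasDerivAt (fun y : ℝ => p * (1 - y)) (p * (-1)) y :=
      (((hasDerivAt_id y).const_sub 1)).const_mul p
    have h3 : HasDerivAt (fun y : ℝ => p * (p - 1) / 2 * (1 - y) ^ 2)
        (p * (p - 1) / 2 * ((2 : ℕ) * (1 - y) ^ (2 - 1) * (-1))) y :=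
      (((hasDerivAt_id y).const_sub 1).pow 2).const_mul _
    have := (h1.add h2).sub h3
    refine this.congr_deriv ?_
    push_cast
    ring
  have hanti : AntitoneOn f (Set.Icc 0 1) := by
    apply antitoneOn_of_deriv_nonpos (convex_Icc 0 1)
    · exact Continuous.continuousOn (by
        have : ∀ y, DifferentiableAt ℝ f y := fun y => (hder y).differentiableAt
        exact Differentiable.continuous this)
    · intro y hy
      exact ((hder y).differentiableAt).differentiableWithinAt
    · intro y hy
      rw [interior_Icc] at hy
      rw [(hder y).deriv]
      have hB : y ^ (p - 1) ≤ 1 + (p - 1) * (y - 1) := by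
        have := rpow_one_add_le_one_add_mul_self (s := y - 1) (p := p - 1)
          (by linarith [hy.1]) (by linarith) (by linarith)
        simpa using this
      nlinarith [mul_le_mul_of_nonneg_left hB hp0.le]
  have hmem1 : (1:ℝ) ∈ Set.Icc (0:ℝ) 1 := by constructor <;> norm_num
  have hmem2 : (1 - r) ∈ Set.Icc (0:ℝ) 1 := by constructor <;> linarith
  have h := hanti hmem2 hmem1 (by linarith)
  have hf1 : f 1 = 1 := by simp [hf]
  have hfr : f (1 - r) = (1 - r) ^ p + p * r - p * (p - 1) / 2 * r ^ 2 := by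
    simp only [hf]
    ring_nf
  rw [hf1, hfr] at h
  linarith


lemma gLB {p r : ℝ} (hp1 : 1 < p) (hp2 : p ≤ 2) (hr0 : 0 ≤ r) (hr1 : r ≤ 1) :
    1 + p * (p - 1) / 4 * r ^ 2 ≤ ((1 + r) ^ p + (1 - r) ^ p) / 2 := by
  have h1 : 1 + p * r ≤ (1 + r) ^ p :=
    one_add_mul_self_le_rpow_one_add (by linarith) hp1.le
  have h2 := B2 hp1 hp2 hr0 hr1
  linarith

lemma NA {p r : ℝ} (hp1 : 1 < p) (hp2 : p ≤ 2) (hr0 : 0 ≤ r) (hr1 : r ≤ 1) :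
    1 + 2 / 5 * (p - 1) * r ^ 2 ≤ (((1 + r) ^ p + (1 - r) ^ p) / 2) ^ (2 / p) := by
  have hp0 : (0:ℝ) < p := by linarith
  have hX : (0:ℝ) ≤ 1 + 2 / 5 * (p - 1) * r ^ 2 := by nlinarith
  have hstep : (1 + 2 / 5 * (p - 1) * r ^ 2) ^ (p / 2)
      ≤ ((1 + r) ^ p + (1 - r) ^ p) / 2 := by
    have hb := bern_le (u := 2 / 5 * (p - 1) * r ^ 2) (β := p / 2)
      (by nlinarith) (by linarith) (by linarith)
    have := gLB hp1 hp2 hr0 hr1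
    nlinarith [mul_nonneg (mul_nonneg hp0.le (by linarith : (0:ℝ) ≤ p - 1)) (sq_nonneg r)]
  calc 1 + 2 / 5 * (p - 1) * r ^ 2
      = ((1 + 2 / 5 * (p - 1) * r ^ 2) ^ (p / 2)) ^ (2 / p) := by
        rw [← Real.rpow_mul hX]
        have h1 : p / 2 * (2 / p) = 1 := by field_simp
        rw [h1, Real.rpow_one]
    _ ≤ (((1 + r) ^ p + (1 - r) ^ p) / 2) ^ (2 / p) := by
        apply Real.rpow_le_rpow (Real.rpow_nonneg hX _) hstep (by positivity)

lemma NB {p r : ℝ} (hp1 : 1 < p) (hp2 : p ≤ 2) (hr0 : 0 ≤ r) (hr1 : r ≤ 1) :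
    r ^ 2 + 2 / 5 * (p - 1) ≤ (((1 + r) ^ p + (1 - r) ^ p) / 2) ^ (2 / p) := by
  have hp0 : (0:ℝ) < p := by linarith
  have hg1 : (1:ℝ) ≤ ((1 + r) ^ p + (1 - r) ^ p) / 2 := by
    have := gLB hp1 hp2 hr0 hr1
    nlinarith [mul_nonneg (mul_nonneg hp0.le (by linarith : (0:ℝ) ≤ p - 1)) (sq_nonneg r)]
  by_cases h : r ^ 2 + 2 / 5 * (p - 1) ≤ 1
  · calc r ^ 2 + 2 / 5 * (p - 1) ≤ 1 := h
      _ ≤ (((1 + r) ^ p + (1 - r) ^ p) / 2) ^ (2 / p) :=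
        Real.one_le_rpow hg1 (by positivity)
  · push_neg at h
    have hr2 : (3:ℝ) / 5 ≤ r ^ 2 := by nlinarith
    have hlog2 : (0.6931471803 : ℝ) < Real.log 2 := Real.log_two_gt_d9
    have hA : (2:ℝ)/5 ≤ r ^ 2 * Real.log 2 := by
      nlinarith [mul_le_mul_of_nonneg_left hlog2.le (sq_nonneg r)]
    have step1 : r ^ 2 + 2 / 5 * (p - 1) ≤ r ^ 2 * (1 + Real.log 2 * (p - 1)) := by
      nlinarith [mul_le_mul_of_nonneg_left hA (by linarith : (0:ℝ) ≤ p - 1)]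
    have step2 : r ^ 2 * (1 + Real.log 2 * (p - 1)) ≤ r ^ 2 * (2 : ℝ) ^ (2 * (p - 1) / p) := by
      apply mul_le_mul_of_nonneg_left _ (sq_nonneg r)
      rw [Real.rpow_def_of_pos (by norm_num : (0:ℝ) < 2)]
      have hexp : 1 + Real.log 2 * (2 * (p - 1) / p) ≤ Real.exp (Real.log 2 * (2 * (p - 1) / p)) := by
        linarith [Real.add_one_le_exp (Real.log 2 * (2 * (p - 1) / p))]
      have hmono : Real.log 2 * (p - 1) ≤ Real.log 2 * (2 * (p - 1) / p) := by
        have h2p : (1:ℝ) ≤ 2 / p := by rw [le_div_iff₀ hp0]; linarith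
        have : (p - 1) ≤ 2 * (p - 1) / p := by
          rw [mul_comm, mul_div_assoc]
          nlinarith [mul_le_mul_of_nonneg_left h2p (by linarith : (0:ℝ) ≤ p - 1)]
        exact mul_le_mul_of_nonneg_left this (by positivity)
      linarith
    have step3 : r ^ 2 * (2 : ℝ) ^ (2 * (p - 1) / p) ≤ (1 + r) ^ 2 * ((2:ℝ) ^ (2 * (p - 1) / p)) / 4 := by
      have hr' : r ≤ (1 + r) / 2 := by linarith
      have : r ^ 2 ≤ ((1 + r) / 2) ^ 2 := by nlinarith
      have h2 : (0:ℝ) ≤ (2:ℝ) ^ (2 * (p - 1) / p) := Real.rpow_nonneg (by norm_num) _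
      nlinarith
    have step4 : (1 + r) ^ 2 * ((2:ℝ) ^ (2 * (p - 1) / p)) / 4 = ((1 + r) ^ p / 2) ^ (2 / p) := by
      rw [Real.div_rpow (Real.rpow_nonneg (by linarith) _) (by norm_num)]
      rw [← Real.rpow_natCast (1 + r) 2, ← Real.rpow_mul (by linarith : (0:ℝ) ≤ 1 + r)]
      rw [mul_comm p (2 / p), div_mul_cancel₀ _ (ne_of_gt hp0)]
      have h4 : (2:ℝ) ^ (2 / p) ≠ 0 := by positivity
      rw [eq_div_iff h4]
      push_cast
      rw [div_mul_eq_mul_div, mul_assoc, ← Real.rpow_add (by norm_num : (0:ℝ) < 2)]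
      have : 2 * (p - 1) / p + 2 / p = 2 := by field_simp; ring
      rw [this]
      norm_num
    have step5 : ((1 + r) ^ p / 2) ^ (2 / p) ≤ (((1 + r) ^ p + (1 - r) ^ p) / 2) ^ (2 / p) := by
      apply Real.rpow_le_rpow (by positivity)
      · apply div_le_div_of_nonneg_right _ (by norm_num)
        · nlinarith [Real.rpow_nonneg (by linarith : (0:ℝ) ≤ 1 - r) p]
      · positivity
    calc r ^ 2 + 2 / 5 * (p - 1) ≤ r ^ 2 * (1 + Real.log 2 * (p - 1)) := step1
      _ ≤ r ^ 2 * (2:ℝ) ^ (2 * (p - 1) / p) := step2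
      _ ≤ (1 + r) ^ 2 * ((2:ℝ) ^ (2 * (p - 1) / p)) / 4 := step3
      _ = ((1 + r) ^ p / 2) ^ (2 / p) := step4
      _ ≤ (((1 + r) ^ p + (1 - r) ^ p) / 2) ^ (2 / p) := step5


lemma hom_rpow {p : ℝ} (hp0 : 0 < p) {c A B : ℝ} (hc : 0 ≤ c) (hA : 0 ≤ A) (hB : 0 ≤ B) :
    (((c * A) ^ p + (c * B) ^ p) / 2) ^ (2 / p) = c ^ 2 * ((A ^ p + B ^ p) / 2) ^ (2 / p) := by
  rw [Real.mul_rpow hc hA, Real.mul_rpow hc hB, ← mul_add, mul_div_assoc,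
      Real.mul_rpow (Real.rpow_nonneg hc p) (by positivity)]
  congr 1
  rw [← Real.rpow_natCast c 2, ← Real.rpow_mul hc]
  congr 1
  push_cast
  field_simp

lemma TP {p : ℝ} (hp1 : 1 < p) (hp2 : p ≤ 2) (s t : ℝ) :
    s ^ 2 + 2 / 5 * (p - 1) * t ^ 2 ≤ ((|s + t| ^ p + |s - t| ^ p) / 2) ^ (2 / p) := by
  have hp0 : (0:ℝ) < p := by linarith
  have habs : |s + t| ^ p + |s - t| ^ p = (|s| + |t|) ^ p + abs (|s| - |t|) ^ p := by
    rcases le_total 0 s with hs | hs <;> rcases le_total 0 t with ht | ht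
    · rw [abs_of_nonneg hs, abs_of_nonneg ht, abs_of_nonneg (by linarith : (0:ℝ) ≤ s + t)]
    · rw [abs_of_nonneg hs, abs_of_nonpos ht, show s + -t = s - t by ring,
        show s - -t = s + t by ring, abs_of_nonneg (by linarith : (0:ℝ) ≤ s - t)]
      exact add_comm _ _
    · rw [abs_of_nonpos hs, abs_of_nonneg ht, show -s + t = -(s - t) by ring,
        show -s - t = -(s + t) by ring, abs_neg,
        ← abs_of_nonpos (by linarith : s - t ≤ 0)]
      exact add_comm _ _
    · rw [abs_of_nonpos hs, abs_of_nonpos ht, show -s + -t = -(s + t) by ring,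
        ← abs_of_nonpos (by linarith : s + t ≤ 0), show -s - -t = -(s - t) by ring, abs_neg]
  rw [habs]
  have hs2 : s ^ 2 = |s| ^ 2 := (sq_abs s).symm
  have ht2 : t ^ 2 = |t| ^ 2 := (sq_abs t).symm
  rw [hs2, ht2]
  set S := |s| with hS
  set T := |t| with hT
  have hS0 : 0 ≤ S := abs_nonneg s
  have hT0 : 0 ≤ T := abs_nonneg t
  clear_value S T
  clear hs2 ht2 habs hS hT
  rcases le_total T S with hTS | hST
  · rcases eq_or_lt_of_le hS0 with hS0' | hSpos
    · have hT' : T = 0 := le_antisymm (by linarith) hT0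
      rw [← hS0', hT']
      norm_num
      rw [Real.zero_rpow (ne_of_gt hp0)]
      norm_num
      rw [Real.zero_rpow (by positivity)]
    · set r := T / S with hr
      have hr0 : 0 ≤ r := by positivity
      have hr1 : r ≤ 1 := by rw [hr, div_le_one hSpos]; exact hTS
      have hTr : T = S * r := by rw [hr]; field_simp
      have e1 : S + T = S * (1 + r) := by rw [hTr]; ring
      have e2 : S - T = S * (1 - r) := by rw [hTr]; ring
      have e3 : |S - T| = S * (1 - r) := by
        rw [abs_of_nonneg (by linarith), e2]
      rw [e1, e3, hom_rpow hp0 hS0 (by linarith) (by linarith)]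
      have := mul_le_mul_of_nonneg_left (NA hp1 hp2 hr0 hr1) (sq_nonneg S)
      calc S ^ 2 + 2 / 5 * (p - 1) * T ^ 2
          = S ^ 2 * (1 + 2 / 5 * (p - 1) * r ^ 2) := by rw [hTr]; ring
        _ ≤ S ^ 2 * (((1 + r) ^ p + (1 - r) ^ p) / 2) ^ (2 / p) := this
  · rcases eq_or_lt_of_le hT0 with hT0' | hTpos
    · have hS' : S = 0 := le_antisymm (by linarith) hS0
      rw [← hT0', hS']
      norm_num
      rw [Real.zero_rpow (ne_of_gt hp0)]
      norm_num
      rw [Real.zero_rpow (by positivity)]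
    · set r := S / T with hr
      have hr0 : 0 ≤ r := by positivity
      have hr1 : r ≤ 1 := by rw [hr, div_le_one hTpos]; exact hST
      have hSr : S = T * r := by rw [hr]; field_simp
      have e1 : S + T = T * (1 + r) := by rw [hSr]; ring
      have e3 : |S - T| = T * (1 - r) := by
        rw [abs_of_nonpos (by linarith), hSr]; ring
      rw [e1, e3, hom_rpow hp0 hT0 (by linarith) (by linarith)]
      have := mul_le_mul_of_nonneg_left (NB hp1 hp2 hr0 hr1) (sq_nonneg T)
      calc S ^ 2 + 2 / 5 * (p - 1) * T ^ 2
          = T ^ 2 * (r ^ 2 + 2 / 5 * (p - 1)) := by rw [hSr]; ring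
        _ ≤ T ^ 2 * (((1 + r) ^ p + (1 - r) ^ p) / 2) ^ (2 / p) := this


lemma superadd {r : ℝ} (hr0 : 0 < r) (hr1 : r < 1) {n : ℕ} (A B : Fin n → ℝ)
    (hA : ∀ i, 0 ≤ A i) (hB : ∀ i, 0 ≤ B i) :
    (∑ i, A i ^ r) ^ (1/r) + (∑ i, B i ^ r) ^ (1/r) ≤ (∑ i, (A i + B i) ^ r) ^ (1/r) := by
  have hSA0 : (0:ℝ) ≤ ∑ i, A i ^ r := sum_nonneg fun i _ => Real.rpow_nonneg (hA i) r
  have hSB0 : (0:ℝ) ≤ ∑ i, B i ^ r := sum_nonneg fun i _ => Real.rpow_nonneg (hB i) r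
  rcases eq_or_lt_of_le hSA0 with hSA | hSA
  · -- A ≡ 0
    have hAz : ∀ i, A i = 0 := by
      intro i
      have h := (Finset.sum_eq_zero_iff_of_nonneg
        (fun i _ => Real.rpow_nonneg (hA i) r)).1 hSA.symm i (mem_univ i)
      have := (Real.rpow_eq_zero (hA i) (ne_of_gt hr0)).1 h
      exact this
    have : ∀ i, A i + B i = B i := fun i => by rw [hAz i, zero_add]
    simp only [this]
    rw [← hSA, Real.zero_rpow (by positivity : (1:ℝ)/r ≠ 0), zero_add]
  rcases eq_or_lt_of_le hSB0 with hSB | hSB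
  · have hBz : ∀ i, B i = 0 := by
      intro i
      have h := (Finset.sum_eq_zero_iff_of_nonneg
        (fun i _ => Real.rpow_nonneg (hB i) r)).1 hSB.symm i (mem_univ i)
      exact (Real.rpow_eq_zero (hB i) (ne_of_gt hr0)).1 h
    have : ∀ i, A i + B i = A i := fun i => by rw [hBz i, add_zero]
    simp only [this]
    rw [← hSB, Real.zero_rpow (by positivity : (1:ℝ)/r ≠ 0), add_zero]
  set α := (∑ i, A i ^ r) ^ (1/r) with hα
  set β := (∑ i, B i ^ r) ^ (1/r) with hβ
  have hαpos : 0 < α := Real.rpow_pos_of_pos hSA _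
  have hβpos : 0 < β := Real.rpow_pos_of_pos hSB _
  have hαβ : 0 < α + β := by linarith
  set l := α / (α + β) with hl
  have hl0 : 0 < l := by positivity
  have hl1 : l < 1 := by rw [hl, div_lt_one hαβ]; linarith
  have hl' : 1 - l = β / (α + β) := by rw [hl]; field_simp; ring
  have hαr : α ^ r = ∑ i, A i ^ r := by
    rw [hα, ← Real.rpow_mul hSA0, one_div, inv_mul_cancel₀ (ne_of_gt hr0), Real.rpow_one]
  have hβr : β ^ r = ∑ i, B i ^ r := by
    rw [hβ, ← Real.rpow_mul hSB0, one_div, inv_mul_cancel₀ (ne_of_gt hr0), Real.rpow_one]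
  have key : ∀ i, l ^ (1 - r) * A i ^ r + (1 - l) ^ (1 - r) * B i ^ r ≤ (A i + B i) ^ r := by
    intro i
    have h1l : (0:ℝ) < 1 - l := by linarith
    have hlne : l ≠ 0 := ne_of_gt hl0
    have h1lne : (1:ℝ) - l ≠ 0 := ne_of_gt h1l
    have hcon := (Real.concaveOn_rpow hr0.le hr1.le).2
      (Set.mem_Ici.2 (div_nonneg (hA i) hl0.le))
      (Set.mem_Ici.2 (div_nonneg (hB i) h1l.le))
      hl0.le h1l.le (by ring)
    simp only [smul_eq_mul] at hcon
    have e0 : l * (A i / l) + (1 - l) * (B i / (1 - l)) = A i + B i := by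
      field_simp
    rw [e0] at hcon
    have e1 : l * (A i / l) ^ r = l ^ (1 - r) * A i ^ r := by
      rw [Real.div_rpow (hA i) hl0.le, Real.rpow_sub hl0, Real.rpow_one]
      field_simp
    have e2 : (1 - l) * (B i / (1 - l)) ^ r = (1 - l) ^ (1 - r) * B i ^ r := by
      rw [Real.div_rpow (hB i) h1l.le, Real.rpow_sub h1l, Real.rpow_one]
      field_simp
    rw [e1, e2] at hcon
    exact hcon
  have hsum : l ^ (1 - r) * α ^ r + (1 - l) ^ (1 - r) * β ^ r ≤ ∑ i, (A i + B i) ^ r := by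
    rw [hαr, hβr, mul_sum, mul_sum, ← Finset.sum_add_distrib]
    exact sum_le_sum fun i _ => key i
  have hid : l ^ (1 - r) * α ^ r + (1 - l) ^ (1 - r) * β ^ r = (α + β) ^ r := by
    rw [hl, hl', Real.div_rpow hαpos.le hαβ.le, Real.div_rpow hβpos.le hαβ.le]
    rw [div_mul_eq_mul_div, div_mul_eq_mul_div]
    rw [← Real.rpow_add hαpos, ← Real.rpow_add hβpos]
    have : 1 - r + r = 1 := by ring
    rw [this, Real.rpow_one, Real.rpow_one, ← add_div]
    rw [div_eq_mul_inv, ← Real.rpow_neg hαβ.le]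
    have e : (α + β) ^ ((1:ℝ) + -(1 - r)) = (α + β) ^ (1:ℝ) * (α + β) ^ (-(1 - r)) :=
      Real.rpow_add hαβ 1 (-(1 - r))
    rw [Real.rpow_one] at e
    rw [← e]
    congr 1
    ring
  have hfin : (α + β) ^ r ≤ ∑ i, (A i + B i) ^ r := hid ▸ hsum
  have h2 := Real.rpow_le_rpow (Real.rpow_nonneg hαβ.le r) hfin (by positivity : (0:ℝ) ≤ 1/r)
  rwa [← Real.rpow_mul hαβ.le, mul_one_div, div_self (ne_of_gt hr0), Real.rpow_one] at h2


lemma sq_to_rpow (u : ℝ) {p r : ℝ} (hpr : 2 * r = p) : (u ^ 2) ^ r = |u| ^ p := by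
  rw [← sq_abs u, ← Real.rpow_natCast |u| 2, ← Real.rpow_mul (abs_nonneg u)]
  norm_num
  rw [hpr]

lemma mid {p : ℝ} (hp1 : 1 < p) (hp2 : p < 2) {n : ℕ} (x y : Fin n → ℝ) :
    (∑ i, |x i| ^ p) ^ (2 / p) + 2 / 5 * (p - 1) * (∑ i, |y i| ^ p) ^ (2 / p)
      ≤ ((∑ i, |x i + y i| ^ p) ^ (2 / p) + (∑ i, |x i - y i| ^ p) ^ (2 / p)) / 2 := by
  have hp0 : (0:ℝ) < p := by linarith
  set r : ℝ := p / 2 with hrdef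
  have hr0 : 0 < r := by positivity
  have hr1 : r < 1 := by rw [hrdef]; linarith
  have hpr : 2 * r = p := by rw [hrdef]; ring
  have hq : 1 / r = 2 / p := by rw [hrdef]; field_simp
  set k : ℝ := 2 / 5 * (p - 1) with hkdef
  have hk0 : 0 ≤ k := by rw [hkdef]; nlinarith
  set A : Fin n → ℝ := fun i => (x i) ^ 2 with hA
  set B : Fin n → ℝ := fun i => k * (y i) ^ 2 with hB
  have hA0 : ∀ i, 0 ≤ A i := fun i => sq_nonneg _
  have hB0 : ∀ i, 0 ≤ B i := fun i => mul_nonneg hk0 (sq_nonneg _)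
  have fA : ∑ i, A i ^ r = ∑ i, |x i| ^ p :=
    Finset.sum_congr rfl fun i _ => sq_to_rpow (x i) hpr
  have fB : ∑ i, B i ^ r = k ^ r * ∑ i, |y i| ^ p := by
    rw [mul_sum]
    refine Finset.sum_congr rfl fun i _ => ?_
    rw [hB, Real.mul_rpow hk0 (sq_nonneg _), sq_to_rpow (y i) hpr]
  have eB : (∑ i, B i ^ r) ^ (1 / r) = k * (∑ i, |y i| ^ p) ^ (2 / p) := by
    rw [fB, Real.mul_rpow (Real.rpow_nonneg hk0 r)
      (sum_nonneg fun i _ => Real.rpow_nonneg (abs_nonneg _) p),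
      ← Real.rpow_mul hk0, mul_one_div, div_self (ne_of_gt hr0), Real.rpow_one, hq]
  set c : Fin n → ℝ := fun i => ((|x i + y i| ^ p + |x i - y i| ^ p) / 2) ^ (2 / p) with hc
  have hAB_le : ∀ i, A i + B i ≤ c i := fun i => TP hp1 hp2.le (x i) (y i)
  have hsum_c : ∑ i, c i ^ r = ((∑ i, |x i + y i| ^ p) + ∑ i, |x i - y i| ^ p) / 2 := by
    have hci : ∀ i ∈ univ, c i ^ r = (|x i + y i| ^ p + |x i - y i| ^ p) / 2 := by
      intro i _
      rw [hc]
      show (((|x i + y i| ^ p + |x i - y i| ^ p) / 2) ^ ((2:ℝ) / p)) ^ r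
        = (|x i + y i| ^ p + |x i - y i| ^ p) / 2
      rw [← Real.rpow_mul (by positivity)]
      have : 2 / p * r = 1 := by rw [hrdef]; field_simp
      rw [this, Real.rpow_one]
    rw [Finset.sum_congr rfl hci, ← sum_div, Finset.sum_add_distrib]
  have step1 : (∑ i, |x i| ^ p) ^ (2 / p) + k * (∑ i, |y i| ^ p) ^ (2 / p)
      ≤ (∑ i, (A i + B i) ^ r) ^ (1 / r) := by
    rw [← eB, ← fA, ← hq]
    exact superadd hr0 hr1 A B hA0 hB0
  have step2 : (∑ i, (A i + B i) ^ r) ^ (1 / r) ≤ (∑ i, c i ^ r) ^ (1 / r) := by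
    apply Real.rpow_le_rpow
      (sum_nonneg fun i _ => Real.rpow_nonneg (by positivity) r)
      (sum_le_sum fun i _ => Real.rpow_le_rpow (by positivity) (hAB_le i) hr0.le)
      (by positivity)
  have step3 : (∑ i, c i ^ r) ^ (1 / r)
      ≤ ((∑ i, |x i + y i| ^ p) ^ (2 / p) + (∑ i, |x i - y i| ^ p) ^ (2 / p)) / 2 := by
    rw [hsum_c, hq]
    set U := ∑ i, |x i + y i| ^ p with hU
    set V := ∑ i, |x i - y i| ^ p with hV
    have hU0 : 0 ≤ U := sum_nonneg fun i _ => Real.rpow_nonneg (abs_nonneg _) p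
    have hV0 : 0 ≤ V := sum_nonneg fun i _ => Real.rpow_nonneg (abs_nonneg _) p
    have hq1 : (1:ℝ) ≤ 2 / p := by rw [le_div_iff₀ hp0]; linarith
    have hcon := (convexOn_rpow hq1).2 (Set.mem_Ici.2 hU0) (Set.mem_Ici.2 hV0)
      (by norm_num : (0:ℝ) ≤ 1/2) (by norm_num : (0:ℝ) ≤ 1/2) (by norm_num)
    simp only [smul_eq_mul] at hcon
    calc ((U + V) / 2) ^ (2 / p) = (1/2 * U + 1/2 * V) ^ (2/p) := by ring_nf
      _ ≤ 1/2 * U ^ (2/p) + 1/2 * V ^ (2/p) := hcon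
      _ = (U ^ (2/p) + V ^ (2/p)) / 2 := by ring
  calc (∑ i, |x i| ^ p) ^ (2 / p) + k * (∑ i, |y i| ^ p) ^ (2 / p)
      ≤ (∑ i, (A i + B i) ^ r) ^ (1 / r) := step1
    _ ≤ (∑ i, c i ^ r) ^ (1 / r) := step2
    _ ≤ _ := step3


lemma Fsmul {p : ℝ} (hp0 : 0 < p) {n : ℕ} (c : ℝ) (z : Fin n → ℝ) :
    (∑ i, |c * z i| ^ p) ^ (2 / p) = c ^ 2 * (∑ i, |z i| ^ p) ^ (2 / p) := by
  have h1 : ∀ i ∈ univ, |c * z i| ^ p = |c| ^ p * |z i| ^ p := fun i _ => by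
    rw [abs_mul, Real.mul_rpow (abs_nonneg c) (abs_nonneg _)]
  rw [Finset.sum_congr rfl h1, ← mul_sum,
    Real.mul_rpow (Real.rpow_nonneg (abs_nonneg c) p)
      (sum_nonneg fun i _ => Real.rpow_nonneg (abs_nonneg _) p),
    ← Real.rpow_mul (abs_nonneg c)]
  congr 1
  rw [show p * (2 / p) = (2:ℝ) by field_simp, show (2:ℝ) = ((2:ℕ):ℝ) by norm_num,
    Real.rpow_natCast, sq_abs]

set_option maxHeartbeats 2000000 in
/-- For `a = 2 ln n/(2 ln n − 1)` with `n ≥ 3`, the function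
`d(x) = ‖x‖_a²/(2(a−1))` is strongly convex w.r.t. the 1-norm with an absolute
constant `c ≥ e⁻²`. -/
theorem prox_function_strongly_convex_one_norm (n : ℕ) (hn : 3 ≤ n)
    (a : ℝ) (ha : a = 2 * Real.log n / (2 * Real.log n - 1))
    (d : EuclideanSpace ℝ (Fin n) → ℝ)
    (hd : ∀ x, d x = 1 / (2 * (a - 1)) * (∑ i, |x i| ^ a) ^ (2 / a)) :
    ∃ c : ℝ, 0 < c ∧ Real.exp (-2) ≤ c ∧
      ∀ x y, d y ≥ d x + (inner ℝ (gradient d x) (y - x) : ℝ) +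
        c / 2 * (∑ i, |y i - x i|) ^ 2 := by
  have hn0 : (0:ℝ) < n := by positivity
  have hn3 : (3:ℝ) ≤ n := by exact_mod_cast hn
  have hL : 1 < Real.log n := by
    have h3 : Real.exp 1 < 3 := lt_trans Real.exp_one_lt_d9 (by norm_num)
    calc (1:ℝ) < Real.log 3 := by
          rw [Real.lt_log_iff_exp_lt (by norm_num : (0:ℝ) < 3)]; exact h3
      _ ≤ Real.log n := Real.log_le_log (by norm_num) hn3
  set L := Real.log n with hLdef
  have h2L : (0:ℝ) < 2 * L - 1 := by linarith
  have hp1 : 1 < a := by rw [ha, lt_div_iff₀ h2L]; linarith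
  have hp2 : a < 2 := by rw [ha, div_lt_iff₀ h2L]; linarith
  have hp0 : (0:ℝ) < a := by linarith
  have ha1 : (0:ℝ) < a - 1 := by linarith
  set C : ℝ := 1 / (2 * (a - 1)) with hC
  have hC0 : 0 < C := by rw [hC]; positivity
  -- the constant
  have hc2 : Real.exp (-2) ≤ 2/5 * Real.exp (-1) := by
    have h1 : Real.exp (-1) ≤ 2/5 := by
      rw [Real.exp_neg]
      have h25 : (5:ℝ)/2 ≤ Real.exp 1 := by
        have := Real.exp_one_gt_d9
        linarith
      calc (Real.exp 1)⁻¹ ≤ ((5:ℝ)/2)⁻¹ :=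
            inv_anti₀ (by norm_num) h25
        _ = 2/5 := by norm_num
    calc Real.exp (-2) = Real.exp (-1) * Real.exp (-1) := by
          rw [← Real.exp_add]; norm_num
      _ ≤ 2/5 * Real.exp (-1) := mul_le_mul_of_nonneg_right h1 (Real.exp_pos _).le
  -- n ^ (2 - 2/a) = e
  have hE : ((n:ℝ)) ^ (2 - 2/a) = Real.exp 1 := by
    have hexp : 2 - 2/a = 1/L := by
      have h2Lne : 2*L - 1 ≠ 0 := ne_of_gt h2L
      rw [ha, div_div_eq_mul_div]
      field_simp
      ring
    rw [hexp, Real.rpow_def_of_pos hn0, ← hLdef, one_div, mul_inv_cancel₀ (by linarith)]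
  refine ⟨2/5 * Real.exp (-1), by positivity, hc2, ?_⟩
  intro x y
  set v : EuclideanSpace ℝ (Fin n) := y - x with hv
  -- differentiability of d everywhere
  have hdFun : d = fun w : EuclideanSpace ℝ (Fin n) => C * (∑ i, |w i| ^ a) ^ (2/a) :=
    funext hd
  have hdiffd : ∀ z : EuclideanSpace ℝ (Fin n), DifferentiableAt ℝ d z := by
    intro z
    have hS : HasFDerivAt (fun w : EuclideanSpace ℝ (Fin n) => ∑ i, |w i| ^ a)
        (∑ i : Fin n, (a * |z i| ^ (a - 2) * z i) • (EuclideanSpace.proj i :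
          EuclideanSpace ℝ (Fin n) →L[ℝ] ℝ)) z := by
      apply HasFDerivAt.fun_sum
      intro i _
      exact (hasDerivAt_abs_rpow (z i) hp1).comp_hasFDerivAt z
        ((EuclideanSpace.proj i : EuclideanSpace ℝ (Fin n) →L[ℝ] ℝ).hasFDerivAt (x := z))
    have hout : HasDerivAt (fun u : ℝ => u ^ (2/a))
        ((2/a) * (∑ i, |z i| ^ a) ^ (2/a - 1)) (∑ i, |z i| ^ a) :=
      Real.hasDerivAt_rpow_const (Or.inr (by rw [le_div_iff₀ hp0]; linarith))
    have hcomp := (hout.comp_hasFDerivAt z hS).const_mul C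
    rw [hdFun]
    exact hcomp.differentiableAt
  -- gradient and directional derivative
  have hgrad : (inner ℝ (gradient d x) v : ℝ) = (fderiv ℝ d x) v := by
    unfold gradient
    exact InnerProductSpace.toDual_symm_apply
  have hline : HasDerivAt (fun t : ℝ => x + t • v) v 0 := by
    have h := ((hasDerivAt_id (0:ℝ)).smul_const v).const_add x
    simpa using h
  have hphi : HasDerivAt (fun t : ℝ => d (x + t • v)) ((fderiv ℝ d x) v) 0 := by
    have hfd : HasFDerivAt d (fderiv ℝ d x) (x + (0:ℝ) • v) := by
      simpa using (hdiffd x).hasFDerivAt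
    exact hfd.comp_hasDerivAt 0 hline
  -- midpoint strong convexity of d
  have hmid : ∀ u w : EuclideanSpace ℝ (Fin n),
      d ((2:ℝ)⁻¹ • (u + w)) ≤ (d u + d w) / 2
        - 1/20 * (∑ i, |u i - w i| ^ a) ^ (2/a) := by
    intro u w
    have hm := mid hp1 hp2 (fun i => (u i + w i)/2) (fun i => (u i - w i)/2)
    simp only [] at hm
    have e1 : (∑ i, |(u i + w i)/2 + (u i - w i)/2| ^ a) = ∑ i, |u i| ^ a :=
      Finset.sum_congr rfl fun i _ => by
        rw [show (u i + w i)/2 + (u i - w i)/2 = u i by ring]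
    have e2 : (∑ i, |(u i + w i)/2 - (u i - w i)/2| ^ a) = ∑ i, |w i| ^ a :=
      Finset.sum_congr rfl fun i _ => by
        rw [show (u i + w i)/2 - (u i - w i)/2 = w i by ring]
    have e3 : (∑ i, |(u i - w i)/2| ^ a) ^ (2/a)
        = (1/2:ℝ)^2 * (∑ i, |u i - w i| ^ a) ^ (2/a) := by
      have h := Fsmul hp0 (1/2 : ℝ) (fun i => u i - w i)
      have e : (∑ i, |(1/2:ℝ) * (u i - w i)| ^ a) = ∑ i, |(u i - w i)/2| ^ a :=
        Finset.sum_congr rfl fun i _ => by rw [show (1/2:ℝ) * (u i - w i) = (u i - w i)/2 by ring]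
      rw [e] at h
      exact h
    rw [e1, e2, e3] at hm
    have hdm : d ((2:ℝ)⁻¹ • (u + w)) = C * (∑ i, |(u i + w i)/2| ^ a) ^ (2/a) := by
      rw [hd]
      congr 2
      refine Finset.sum_congr rfl fun i _ => ?_
      rw [show ((2:ℝ)⁻¹ • (u + w)) i = (u i + w i)/2 from by
        simp only [PiLp.smul_apply, PiLp.add_apply, smul_eq_mul]; ring]
    have hdu : d u = C * (∑ i, |u i| ^ a) ^ (2/a) := hd u
    have hdw : d w = C * (∑ i, |w i| ^ a) ^ (2/a) := hd w
    have h' := mul_le_mul_of_nonneg_left hm hC0.le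
    have hexpand : C * ((∑ i, |(u i + w i)/2| ^ a) ^ (2/a)
        + 2/5 * (a - 1) * ((1/2:ℝ)^2 * (∑ i, |u i - w i| ^ a) ^ (2/a)))
        = C * (∑ i, |(u i + w i)/2| ^ a) ^ (2/a)
          + 1/20 * (∑ i, |u i - w i| ^ a) ^ (2/a) := by
      rw [hC]
      field_simp
      ring
    rw [hexpand] at h'
    rw [hdm, hdu, hdw]
    linarith [h']
  -- the quadratic gap along the segment
  set Φ : ℝ := (∑ i, |v i| ^ a) ^ (2/a) with hΦdef
  have hΦ0 : 0 ≤ Φ :=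
    Real.rpow_nonneg (sum_nonneg fun i _ => Real.rpow_nonneg (abs_nonneg _) a) _
  have hxy : x + (1:ℝ) • v = y := by rw [one_smul, hv]; abel
  have hInd : ∀ k : ℕ, d (x + ((1/2:ℝ)^k) • v)
      ≤ (1 - (1/2:ℝ)^k) * d x + (1/2:ℝ)^k * d y
        - 1/5 * ((1/2:ℝ)^k * (1 - (1/2:ℝ)^k)) * Φ := by
    intro k
    induction k with
    | zero =>
      rw [pow_zero, hxy]
      norm_num
    | succ k ih =>
      set l : ℝ := (1/2:ℝ)^k with hl
      have hl0 : 0 < l := by positivity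
      have hmidk := hmid x (x + l • v)
      have hpt : (2:ℝ)⁻¹ • (x + (x + l • v)) = x + (l * (1/2)) • v := by
        module
      have hdiffF : (∑ i, |x i - (x + l • v) i| ^ a) ^ (2/a) = l^2 * Φ := by
        have e : ∀ i ∈ univ, |x i - (x + l • v) i| ^ a = |l * v i| ^ a := fun i _ => by
          simp only [PiLp.add_apply, PiLp.smul_apply, smul_eq_mul]
          rw [show x i - (x i + l * v i) = -(l * v i) by ring, abs_neg]
        rw [Finset.sum_congr rfl e, Fsmul hp0 l (fun i => v i)]
      rw [hpt, hdiffF] at hmidk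
      rw [pow_succ, ← hl]
      linarith [ih, hmidk]
  have hslope : ∀ k : ℕ, (d (x + ((1/2:ℝ)^k) • v) - d x) / ((1/2:ℝ)^k)
      ≤ d y - d x - 1/5 * (1 - (1/2:ℝ)^k) * Φ := by
    intro k
    have hl0 : (0:ℝ) < (1/2:ℝ)^k := by positivity
    rw [div_le_iff₀ hl0]
    nlinarith [hInd k]
  have hpow : Tendsto (fun k : ℕ => ((1:ℝ)/2)^k) atTop (𝓝 0) :=
    tendsto_pow_atTop_nhds_zero_of_lt_one (by norm_num) (by norm_num)
  have hlim1 : Tendsto (fun k : ℕ => (d (x + ((1/2:ℝ)^k) • v) - d x) / ((1/2:ℝ)^k))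
      atTop (𝓝 ((fderiv ℝ d x) v)) := by
    have hs := hasDerivAt_iff_tendsto_slope.mp hphi
    have hseq : Tendsto (fun k : ℕ => ((1:ℝ)/2)^k) atTop (𝓝[≠] (0:ℝ)) := by
      refine tendsto_nhdsWithin_of_tendsto_nhds_of_eventually_within _ hpow ?_
      refine Eventually.of_forall fun k => ?_
      simp only [Set.mem_compl_iff, Set.mem_singleton_iff]
      positivity
    have hcomp := hs.comp hseq
    refine hcomp.congr fun k => ?_
    show slope (fun t : ℝ => d (x + t • v)) 0 ((1/2)^k) = _
    rw [slope_def_field]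
    rw [zero_smul, add_zero, sub_zero]
  have hlim2 : Tendsto (fun k : ℕ => d y - d x - 1/5 * (1 - (1/2:ℝ)^k) * Φ) atTop
      (𝓝 (d y - d x - 1/5 * (1 - (0:ℝ)) * Φ)) := by
    have h1 : Tendsto (fun k : ℕ => (1:ℝ) - ((1:ℝ)/2)^k) atTop (𝓝 (1 - 0)) :=
      tendsto_const_nhds.sub hpow
    have h2 := (h1.const_mul (1/5:ℝ)).mul_const Φ
    exact tendsto_const_nhds.sub h2
  have hmain : (fderiv ℝ d x) v ≤ d y - d x - 1/5 * (1 - (0:ℝ)) * Φ :=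
    le_of_tendsto_of_tendsto' hlim1 hlim2 hslope
  -- ℓ¹ comparison
  have hT2 : (∑ i, |v i|) ^ 2 ≤ Real.exp 1 * Φ := by
    have hnne : (n:ℝ) ≠ 0 := ne_of_gt hn0
    have hw : ∑ _i : Fin n, (1/(n:ℝ)) = 1 := by
      rw [Finset.sum_const, card_univ, Fintype.card_fin, nsmul_eq_mul]
      field_simp
    have hj := Real.rpow_arith_mean_le_arith_mean_rpow univ (fun _ : Fin n => 1/(n:ℝ))
      (fun i => |v i|) (fun i _ => by positivity) hw (fun i _ => abs_nonneg _) hp1.le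
    rw [← mul_sum, ← mul_sum] at hj
    have hT0 : 0 ≤ ∑ i, |v i| := sum_nonneg fun i _ => abs_nonneg _
    have hS0 : 0 ≤ ∑ i, |v i| ^ a :=
      sum_nonneg fun i _ => Real.rpow_nonneg (abs_nonneg _) a
    have h3 := Real.rpow_le_rpow (Real.rpow_nonneg (by positivity) a) hj
      (by positivity : (0:ℝ) ≤ 2/a)
    have hL1 : ((1/(n:ℝ) * ∑ i, |v i|) ^ a) ^ (2/a) = (1/(n:ℝ) * ∑ i, |v i|)^2 := by
      rw [← Real.rpow_mul (by positivity), show a * (2/a) = (2:ℝ) by field_simp,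
        show (2:ℝ) = ((2:ℕ):ℝ) by norm_num, Real.rpow_natCast]
    have hR1 : (1/(n:ℝ) * ∑ i, |v i| ^ a) ^ (2/a) = (1/(n:ℝ)) ^ ((2:ℝ)/a) * Φ := by
      rw [Real.mul_rpow (by positivity) hS0, hΦdef]
    rw [hL1, hR1] at h3
    have hn2 : ((n:ℝ))^2 * ((1/(n:ℝ)) ^ ((2:ℝ)/a)) = Real.exp 1 := by
      rw [one_div, ← Real.rpow_natCast (n:ℝ) 2, Real.inv_rpow hn0.le,
        ← Real.rpow_neg hn0.le, ← Real.rpow_add hn0, ← hE]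
      norm_num [sub_eq_add_neg]
    calc (∑ i, |v i|)^2 = ((n:ℝ))^2 * (1/(n:ℝ) * ∑ i, |v i|)^2 := by
          field_simp
      _ ≤ ((n:ℝ))^2 * ((1/(n:ℝ)) ^ ((2:ℝ)/a) * Φ) :=
          mul_le_mul_of_nonneg_left h3 (by positivity)
      _ = Real.exp 1 * Φ := by rw [← mul_assoc, hn2]
  have hvyx : (∑ i, |y i - x i|) = ∑ i, |v i| :=
    Finset.sum_congr rfl fun i _ => by rw [hv]; simp [PiLp.sub_apply]
  have hfin : (2/5 * Real.exp (-1)) / 2 * (∑ i, |y i - x i|) ^ 2 ≤ 1/5 * Φ := by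
    rw [hvyx]
    calc (2/5 * Real.exp (-1)) / 2 * (∑ i, |v i|) ^ 2
        ≤ (2/5 * Real.exp (-1)) / 2 * (Real.exp 1 * Φ) :=
          mul_le_mul_of_nonneg_left hT2 (by positivity)
      _ = 1/5 * Φ := by
          rw [Real.exp_neg]
          have he : Real.exp 1 ≠ 0 := ne_of_gt (Real.exp_pos 1)
          field_simp
  rw [ge_iff_le, hgrad]
  linarith [hmain, hfin]
end
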